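/- arXiv:1106.0412 — 4 statements merged into one kernel-verified Lean document; each statement's English description precedes it below -/
import Mathlib

section
/- Let ι_Y : A → Y be a map. Then secat(ι_Y) ≤ n if and only if ι_Y is simply dominated by some map ι_X : A → X with Pushcat(ι_X) ≤ n; and relcat(ι_Y) ≤ n if and only if ι_Y is relatively dominated by some map ι_X : A → X with Pushcat(ι_X) ≤ n. -/
open unitInterval

universe u

noncomputable section

/-- A continuous map is a homotopy equivalence. -/
def IsHEquiv {X Y : Type u} [TopologicalSpace X] [TopologicalSpace Y] (f : C(X, Y)) : Prop :=
  ∃ g : C(Y, X), (f.comp g).Homotopic (ContinuousMap.id Y) ∧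
    (g.comp f).Homotopic (ContinuousMap.id X)

section HPO

variable {Z A B P : Type u} [TopologicalSpace Z] [TopologicalSpace A] [TopologicalSpace B]
  [TopologicalSpace P]

/-- Gluing relation of the double mapping cylinder. -/
inductive HPORel (f : C(Z, A)) (g : C(Z, B)) :
    (A ⊕ ((Z × I) ⊕ B)) → (A ⊕ ((Z × I) ⊕ B)) → Prop
  | left (z : Z) : HPORel f g (Sum.inl (f z)) (Sum.inr (Sum.inl (z, 0)))
  | right (z : Z) : HPORel f g (Sum.inr (Sum.inl (z, 1))) (Sum.inr (Sum.inr (g z)))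

/-- The double mapping cylinder (standard homotopy pushout) of `f : Z → A` and `g : Z → B`. -/
def HPO (f : C(Z, A)) (g : C(Z, B)) : Type u := Quot (HPORel f g)

instance (f : C(Z, A)) (g : C(Z, B)) : TopologicalSpace (HPO f g) :=
  inferInstanceAs (TopologicalSpace (Quot _))

/-- Left structural map of the homotopy pushout. -/
def HPO.inl (f : C(Z, A)) (g : C(Z, B)) : C(A, HPO f g) :=
  ⟨fun a => Quot.mk _ (Sum.inl a), continuous_quot_mk.comp continuous_inl⟩

/-- Right structural map of the homotopy pushout. -/
def HPO.inr (f : C(Z, A)) (g : C(Z, B)) : C(B, HPO f g) :=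
  ⟨fun b => Quot.mk _ (Sum.inr (Sum.inr b)),
    continuous_quot_mk.comp (continuous_inr.comp continuous_inr)⟩

/-- Cylinder part of the homotopy pushout. -/
def HPO.cyl (f : C(Z, A)) (g : C(Z, B)) : C(Z × I, HPO f g) :=
  ⟨fun zt => Quot.mk _ (Sum.inr (Sum.inl zt)),
    continuous_quot_mk.comp (continuous_inr.comp continuous_inl)⟩

/-- The whisker map induced on the double mapping cylinder by a homotopy commutative square. -/
def HPO.desc (f : C(Z, A)) (g : C(Z, B)) (h : C(A, P)) (k : C(B, P))
    (H : ContinuousMap.Homotopy (h.comp f) (k.comp g)) : C(HPO f g, P) :=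
  ⟨Quot.lift (Sum.elim h (Sum.elim (fun zt => H (zt.2, zt.1)) k))
    (by
      rintro x y (⟨z⟩ | ⟨z⟩)
      · simp only [Sum.elim_inl, Sum.elim_inr]; exact (H.apply_zero z).symm
      · simp only [Sum.elim_inl, Sum.elim_inr]; exact H.apply_one z),
    continuous_quot_lift _ (by
      apply Continuous.sumElim h.continuous
      apply Continuous.sumElim _ k.continuous
      exact H.continuous.comp continuous_swap)⟩

/-- The square with legs `f, g` and cone maps `h, k` is a homotopy pushout. -/
def IsHPO (f : C(Z, A)) (g : C(Z, B)) (h : C(A, P)) (k : C(B, P)) : Prop :=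
  ∃ H : ContinuousMap.Homotopy (h.comp f) (k.comp g), IsHEquiv (HPO.desc f g h k H)

end HPO

section HPB

variable {A B X P : Type u} [TopologicalSpace A] [TopologicalSpace B] [TopologicalSpace X]
  [TopologicalSpace P]

/-- The standard homotopy pullback of `f : A → X` and `g : B → X`. -/
def HPB (f : C(A, X)) (g : C(B, X)) : Type u :=
  { p : A × C(I, X) × B // p.2.1 0 = f p.1 ∧ p.2.1 1 = g p.2.2 }

instance (f : C(A, X)) (g : C(B, X)) : TopologicalSpace (HPB f g) :=
  inferInstanceAs (TopologicalSpace (Subtype _))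

/-- First projection of the homotopy pullback. -/
def HPB.fst (f : C(A, X)) (g : C(B, X)) : C(HPB f g, A) :=
  ⟨fun p => p.1.1, continuous_fst.comp continuous_subtype_val⟩

/-- Second projection of the homotopy pullback. -/
def HPB.snd (f : C(A, X)) (g : C(B, X)) : C(HPB f g, B) :=
  ⟨fun p => p.1.2.2, continuous_snd.comp (continuous_snd.comp continuous_subtype_val)⟩

/-- The tautological homotopy over the homotopy pullback. -/
def HPB.pathHomotopy (f : C(A, X)) (g : C(B, X)) :
    ContinuousMap.Homotopy (g.comp (HPB.snd f g)) (f.comp (HPB.fst f g)) where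
  toFun := fun q => q.2.1.2.1 (σ q.1)
  continuous_toFun := by
    have h1 : Continuous fun q : I × HPB f g => (q.2.1.2.1, σ q.1) := by
      refine Continuous.prodMk ?_ (continuous_symm.comp continuous_fst)
      exact (continuous_fst.comp (continuous_snd.comp continuous_subtype_val)).comp continuous_snd
    exact ContinuousEval.continuous_eval.comp h1
  map_zero_left := fun p => by simp [HPB.snd, p.2.2]
  map_one_left := fun p => by simp [HPB.fst, p.2.1]

/-- The comparison (whisker) map into the homotopy pullback. -/
def HPB.lift (f : C(A, X)) (g : C(B, X)) (p : C(P, A)) (q : C(P, B))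
    (H : ContinuousMap.Homotopy (f.comp p) (g.comp q)) : C(P, HPB f g) :=
  ⟨fun y => ⟨(p y, ((H.toContinuousMap.comp ⟨Prod.swap, continuous_swap⟩).curry y, q y)),
      by simp⟩,
    by
      apply Continuous.subtype_mk
      exact p.continuous.prodMk
        (((H.toContinuousMap.comp ⟨Prod.swap, continuous_swap⟩).curry).continuous.prodMk
          q.continuous)⟩

/-- The square with cospan `f, g` and cone maps `p, q` is a homotopy pullback. -/
def IsHPB (f : C(A, X)) (g : C(B, X)) (p : C(P, A)) (q : C(P, B)) : Prop :=
  ∃ H : ContinuousMap.Homotopy (f.comp p) (g.comp q), IsHEquiv (HPB.lift f g p q H)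

end HPB

/-- One step of the Ganea construction: a space over `X` under `A`. -/
structure GaneaStep (A X : Type u) [TopologicalSpace A] [TopologicalSpace X] where
  G : Type u
  inst : TopologicalSpace G
  g : @ContinuousMap G X inst _
  α : @ContinuousMap A G _ inst

attribute [instance] GaneaStep.inst

/-- The Ganea construction of a map `ι : A → X`. -/
def ganea {A X : Type u} [TopologicalSpace A] [TopologicalSpace X] (ι : C(A, X)) :
    ℕ → GaneaStep A X
  | 0 => { G := A, inst := inferInstance, g := ι, α := ContinuousMap.id A }
  | n + 1 =>
    let s := ganea ι n
    { G := HPO (HPB.snd s.g ι) (HPB.fst s.g ι)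
      inst := inferInstance
      g := HPO.desc (HPB.snd s.g ι) (HPB.fst s.g ι) ι s.g (HPB.pathHomotopy s.g ι)
      α := HPO.inl (HPB.snd s.g ι) (HPB.fst s.g ι) }

/-- Least natural number (as `ℕ∞`) satisfying a predicate. -/
def theNat (P : ℕ → Prop) : ℕ∞ := sInf ((Nat.cast : ℕ → ℕ∞) '' { n | P n })

/-- `secat ι ≤ n` : the `n`-th Ganea map admits a homotopy section. -/
def secatLe {A X : Type u} [TopologicalSpace A] [TopologicalSpace X] (ι : C(A, X)) (n : ℕ) :
    Prop :=
  ∃ s : C(X, (ganea ι n).G), ((ganea ι n).g.comp s).Homotopic (ContinuousMap.id X)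

/-- `relcat ι ≤ n` : the `n`-th Ganea map admits a homotopy section compatible with `α_n`. -/
def relcatLe {A X : Type u} [TopologicalSpace A] [TopologicalSpace X] (ι : C(A, X)) (n : ℕ) :
    Prop :=
  ∃ s : C(X, (ganea ι n).G), ((ganea ι n).g.comp s).Homotopic (ContinuousMap.id X) ∧
    (s.comp ι).Homotopic (ganea ι n).α

/-- Sectional category (James), Ganea style. -/
def secat {A X : Type u} [TopologicalSpace A] [TopologicalSpace X] (ι : C(A, X)) : ℕ∞ :=
  theNat (secatLe ι)

/-- Relative category of a map. -/
def relcat {A X : Type u} [TopologicalSpace A] [TopologicalSpace X] (ι : C(A, X)) : ℕ∞ :=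
  theNat (relcatLe ι)

/-- `PushcatLe A X tX ι n` : `ι` is obtained from a homotopy equivalence by at most `n`
successive homotopy pushouts along maps to `A`. -/
inductive PushcatLe (A : Type u) [tA : TopologicalSpace A] :
    ∀ (X : Type u) (tX : TopologicalSpace X), @ContinuousMap A X tA tX → ℕ → Prop
  | equiv {X : Type u} [tX : TopologicalSpace X] (ι : C(A, X)) :
      IsHEquiv ι → PushcatLe A X tX ι 0
  | step {X X' Z : Type u} [tX : TopologicalSpace X] [tX' : TopologicalSpace X']
      [tZ : TopologicalSpace Z] {ι : C(A, X)} {n : ℕ} (h : PushcatLe A X tX ι n)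
      (ρ : C(Z, A)) (τ : C(Z, X)) (ι' : C(A, X')) (χ : C(X, X'))
      (hpo : IsHPO ρ τ ι' χ) (hχ : (χ.comp ι).Homotopic ι') :
      PushcatLe A X' tX' ι' (n + 1)
  | homotopic {X : Type u} [tX : TopologicalSpace X] {ι ι' : C(A, X)} {n : ℕ}
      (h : PushcatLe A X tX ι n) (hh : ι.Homotopic ι') : PushcatLe A X tX ι' n

/-- `RelcatLe` : as `PushcatLe`, with a compatible section at each step. -/
inductive RelcatLe (A : Type u) [tA : TopologicalSpace A] :
    ∀ (X : Type u) (tX : TopologicalSpace X), @ContinuousMap A X tA tX → ℕ → Prop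
  | equiv {X : Type u} [tX : TopologicalSpace X] (ι : C(A, X)) :
      IsHEquiv ι → RelcatLe A X tX ι 0
  | step {X X' Z : Type u} [tX : TopologicalSpace X] [tX' : TopologicalSpace X']
      [tZ : TopologicalSpace Z] {ι : C(A, X)} {n : ℕ} (h : RelcatLe A X tX ι n)
      (ρ : C(Z, A)) (τ : C(Z, X)) (ι' : C(A, X')) (χ : C(X, X'))
      (hpo : IsHPO ρ τ ι' χ) (hχ : (χ.comp ι).Homotopic ι')
      (σ₀ : C(A, Z)) (hσ : (ρ.comp σ₀).Homotopic (ContinuousMap.id A))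
      (hτσ : (τ.comp σ₀).Homotopic ι) :
      RelcatLe A X' tX' ι' (n + 1)
  | homotopic {X : Type u} [tX : TopologicalSpace X] {ι ι' : C(A, X)} {n : ℕ}
      (h : RelcatLe A X tX ι n) (hh : ι.Homotopic ι') : RelcatLe A X tX ι' n

/-- Strong pushout category of a map. -/
def Pushcat {A X : Type u} [tA : TopologicalSpace A] [tX : TopologicalSpace X]
    (ι : C(A, X)) : ℕ∞ :=
  theNat (fun n => PushcatLe A X tX ι n)

/-- Strong relative category of a map. -/
def Relcat {A X : Type u} [tA : TopologicalSpace A] [tX : TopologicalSpace X]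
    (ι : C(A, X)) : ℕ∞ :=
  theNat (fun n => RelcatLe A X tX ι n)

/-- Lusternik–Schnirelmann category (Ganea-normalized) of a pointed space. -/
def catP (X : Type u) [TopologicalSpace X] (x₀ : X) : ℕ∞ :=
  secat (ContinuousMap.const PUnit.{u + 1} x₀)

/-- Strong (Fox) category of a pointed space. -/
def CatP (X : Type u) [TopologicalSpace X] (x₀ : X) : ℕ∞ :=
  Relcat (ContinuousMap.const PUnit.{u + 1} x₀)

/-- `g : A → X` is the homotopy cofibre of `f : Y → A` (with cone point `x₀`). -/
def IsHCofiberPt {Y A X : Type u} [TopologicalSpace Y] [TopologicalSpace A] [TopologicalSpace X]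
    (f : C(Y, A)) (g : C(A, X)) (x₀ : X) : Prop :=
  IsHPO f (ContinuousMap.const Y (PUnit.unit : PUnit.{u + 1})) g
    (ContinuousMap.const PUnit.{u + 1} x₀)

/-- The diagonal map. -/
def diagMap (X : Type u) [TopologicalSpace X] : C(X, X × X) :=
  ⟨fun x => (x, x), continuous_id.prodMk continuous_id⟩

/-- Topological complexity (Farber, normalized). -/
def compl (X : Type u) [TopologicalSpace X] : ℕ∞ := secat (diagMap X)

/-- Strong complexity: strong relative category of the diagonal. -/
def Compl' (X : Type u) [TopologicalSpace X] : ℕ∞ := Relcat (diagMap X)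

end

noncomputable section
/-- `ιY` is simply dominated by `ιX`. -/
def SimplyDominatedBy {A Y X : Type u} [TopologicalSpace A] [TopologicalSpace Y]
    [TopologicalSpace X] (ιY : C(A, Y)) (ιX : C(A, X)) : Prop :=
  ∃ (φ : C(X, Y)) (s : C(Y, X)), (φ.comp ιX).Homotopic ιY ∧
    (φ.comp s).Homotopic (ContinuousMap.id Y)

/-- `ιY` is relatively dominated by `ιX`. -/
def RelDominatedBy {A Y X : Type u} [TopologicalSpace A] [TopologicalSpace Y]
    [TopologicalSpace X] (ιY : C(A, Y)) (ιX : C(A, X)) : Prop :=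
  ∃ (φ : C(X, Y)) (s : C(Y, X)), (φ.comp ιX).Homotopic ιY ∧
    (φ.comp s).Homotopic (ContinuousMap.id Y) ∧ (s.comp ιY).Homotopic ιX
end

noncomputable section Helpers
open ContinuousMap Set

/-- Clamp a real number into the unit interval. -/
def pI (r : ℝ) : I := Set.projIcc 0 1 zero_le_one r

lemma continuous_pI : Continuous pI := @continuous_projIcc ℝ _ 0 1 zero_le_one _ _

lemma pI_mem {r : ℝ} (h : r ∈ Set.Icc (0:ℝ) 1) : pI r = ⟨r, h⟩ :=
  Set.projIcc_of_mem _ h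

lemma pI_val (t : I) : pI (t : ℝ) = t := by
  rw [pI_mem t.2]

lemma pI_zero : pI 0 = 0 := by rw [pI_mem ⟨le_refl 0, zero_le_one⟩]; rfl

lemma pI_one : pI 1 = 1 := by rw [pI_mem ⟨zero_le_one, le_refl 1⟩]; rfl

section HPOlemmas

variable {Z A B P : Type u} [TopologicalSpace Z] [TopologicalSpace A] [TopologicalSpace B]
  [TopologicalSpace P]

lemma HPO.cyl_zero (f : C(Z, A)) (g : C(Z, B)) (z : Z) :
    HPO.cyl f g (z, 0) = HPO.inl f g (f z) :=
  (Quot.sound (HPORel.left z)).symm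

lemma HPO.cyl_one (f : C(Z, A)) (g : C(Z, B)) (z : Z) :
    HPO.cyl f g (z, 1) = HPO.inr f g (g z) :=
  Quot.sound (HPORel.right z)

lemma HPO.ind {f : C(Z, A)} {g : C(Z, B)} {motive : HPO f g → Prop}
    (hl : ∀ a, motive (HPO.inl f g a)) (hc : ∀ z t, motive (HPO.cyl f g (z, t)))
    (hr : ∀ b, motive (HPO.inr f g b)) : ∀ x, motive x := by
  refine Quot.ind ?_
  rintro (a | ⟨⟨z, t⟩ | b⟩)
  · exact hl a
  · exact hc z t
  · exact hr b

/-- The canonical homotopy of the standard homotopy pushout square. -/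
def HPO.canonHomotopy (f : C(Z, A)) (g : C(Z, B)) :
    ContinuousMap.Homotopy ((HPO.inl f g).comp f) ((HPO.inr f g).comp g) where
  toFun := fun p => HPO.cyl f g (p.2, p.1)
  continuous_toFun := (HPO.cyl f g).continuous.comp (continuous_snd.prodMk continuous_fst)
  map_zero_left z := HPO.cyl_zero f g z
  map_one_left z := HPO.cyl_one f g z

lemma HPO.desc_canon (f : C(Z, A)) (g : C(Z, B)) :
    HPO.desc f g (HPO.inl f g) (HPO.inr f g) (HPO.canonHomotopy f g) =
      ContinuousMap.id (HPO f g) := by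
  apply ContinuousMap.ext
  refine HPO.ind (fun a => rfl) (fun z t => rfl) (fun b => rfl)

lemma isHPO_canon (f : C(Z, A)) (g : C(Z, B)) :
    IsHPO f g (HPO.inl f g) (HPO.inr f g) := by
  refine ⟨HPO.canonHomotopy f g, ContinuousMap.id _, ?_, ?_⟩ <;>
    rw [HPO.desc_canon] <;>
    simp only [ContinuousMap.comp_id, ContinuousMap.id_comp] <;>
    exact ContinuousMap.Homotopic.refl _

variable {Z' A' B' : Type u} [TopologicalSpace Z'] [TopologicalSpace A'] [TopologicalSpace B']

/-- Functoriality of the double mapping cylinder for strictly commuting squares. -/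
def HPO.map (f : C(Z, A)) (g : C(Z, B)) (f' : C(Z', A')) (g' : C(Z', B'))
    (zm : C(Z, Z')) (am : C(A, A')) (bm : C(B, B'))
    (ha : ∀ z, am (f z) = f' (zm z)) (hb : ∀ z, bm (g z) = g' (zm z)) :
    C(HPO f g, HPO f' g') :=
  ⟨Quot.lift (Sum.elim (fun a => HPO.inl f' g' (am a))
      (Sum.elim (fun zt => HPO.cyl f' g' (zm zt.1, zt.2)) (fun b => HPO.inr f' g' (bm b))))
    (by
      rintro x y (⟨z⟩ | ⟨z⟩)
      · simp only [Sum.elim_inl, Sum.elim_inr]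
        rw [ha]
        exact (HPO.cyl_zero f' g' (zm z)).symm
      · simp only [Sum.elim_inl, Sum.elim_inr]
        rw [hb]
        exact HPO.cyl_one f' g' (zm z)),
    continuous_quot_lift _ (by
      apply Continuous.sumElim ((HPO.inl f' g').continuous.comp am.continuous)
      apply Continuous.sumElim _ ((HPO.inr f' g').continuous.comp bm.continuous)
      exact (HPO.cyl f' g').continuous.comp
        ((zm.continuous.comp continuous_fst).prodMk continuous_snd))⟩

end HPOlemmas

section GaneaLemmas

variable {A X : Type u} [TopologicalSpace A] [TopologicalSpace X] (ι : C(A, X))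

lemma ganea_g_comp_α (n : ℕ) : (ganea ι n).g.comp (ganea ι n).α = ι := by
  cases n with
  | zero => exact ContinuousMap.ext fun a => rfl
  | succ n => exact ContinuousMap.ext fun a => rfl

end GaneaLemmas

end Helpers
noncomputable section Functoriality
open ContinuousMap Set

variable {A X Y : Type u} [TopologicalSpace A] [TopologicalSpace X] [TopologicalSpace Y]

/-- Data of a map between Ganea constructions induced by `φ` with `φ ∘ ι ≃ ι'`. -/
structure GaneaMapData (ι : C(A, X)) (ι' : C(A, Y)) (φ : C(X, Y)) (n : ℕ) where
  Φ : C((ganea ι n).G, (ganea ι' n).G)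
  hg : ContinuousMap.Homotopy ((ganea ι' n).g.comp Φ) (φ.comp (ganea ι n).g)
  hα : ∀ a, Φ ((ganea ι n).α a) = (ganea ι' n).α a

variable {ι : C(A, X)} {ι' : C(A, Y)} {φ : C(X, Y)}
variable (h : ContinuousMap.Homotopy (φ.comp ι) ι') {n : ℕ} (D : GaneaMapData ι ι' φ n)

/-- The master whisker function used both for the induced map on homotopy pullbacks and
for the comparison homotopy. -/
def Wfun (s u : I) (z : HPB (ganea ι n).g ι) : Y :=
  if (u : ℝ) ≤ (1 - s) / 3 then D.hg (pI (s + 3 * u), HPB.fst (ganea ι n).g ι z)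
  else if (u : ℝ) ≤ (2 + s) / 3 then φ (z.1.2.1 (pI ((3 * u - 1 + s) / (1 + 2 * s))))
  else h (pI (3 * u - 2 - s), HPB.snd (ganea ι n).g ι z)

lemma continuous_Wfun :
    Continuous fun p : (I × I) × HPB (ganea ι n).g ι => Wfun h D p.1.1 p.1.2 p.2 := by
  have cs : Continuous fun p : (I × I) × HPB (ganea ι n).g ι => ((p.1.1 : ℝ)) :=
    continuous_subtype_val.comp (continuous_fst.comp continuous_fst)
  have cu : Continuous fun p : (I × I) × HPB (ganea ι n).g ι => ((p.1.2 : ℝ)) :=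
    continuous_subtype_val.comp (continuous_snd.comp continuous_fst)
  have cγ : Continuous fun p : (I × I) × HPB (ganea ι n).g ι => p.2.1.2.1 :=
    continuous_fst.comp (continuous_snd.comp (continuous_subtype_val.comp continuous_snd))
  have hb2 : Continuous fun p : (I × I) × HPB (ganea ι n).g ι =>
      φ (p.2.1.2.1 (pI ((3 * p.1.2 - 1 + p.1.1) / (1 + 2 * p.1.1)))) := by
    have cdiv : Continuous fun p : (I × I) × HPB (ganea ι n).g ι =>
        ((3 * p.1.2 - 1 + p.1.1) / (1 + 2 * p.1.1) : ℝ) := by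
      refine Continuous.div (by fun_prop) (by fun_prop) (fun p => ?_)
      have := p.1.1.2.1
      intro hc; linarith
    exact φ.continuous.comp (ContinuousEval.continuous_eval.comp
      (cγ.prodMk (continuous_pI.comp cdiv)))
  have hb3 : Continuous fun p : (I × I) × HPB (ganea ι n).g ι =>
      h (pI (3 * p.1.2 - 2 - p.1.1), HPB.snd (ganea ι n).g ι p.2) :=
    h.continuous.comp ((continuous_pI.comp (by fun_prop)).prodMk
      ((HPB.snd (ganea ι n).g ι).continuous.comp continuous_snd))
  have hb1 : Continuous fun p : (I × I) × HPB (ganea ι n).g ι =>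
      D.hg (pI (p.1.1 + 3 * p.1.2), HPB.fst (ganea ι n).g ι p.2) :=
    D.hg.continuous.comp ((continuous_pI.comp (by fun_prop)).prodMk
      ((HPB.fst (ganea ι n).g ι).continuous.comp continuous_snd))
  refine Continuous.if_le hb1 ?_ cu (by fun_prop) ?_
  · -- inner if continuous
    refine Continuous.if_le hb2 hb3 cu (by fun_prop) ?_
    intro p heq
    have hps : (0:ℝ) ≤ p.1.1 := p.1.1.2.1
    have hnum : (3 * (p.1.2:ℝ) - 1 + p.1.1) = 1 + 2 * p.1.1 := by rw [heq]; ring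
    have hden : (1 + 2 * (p.1.1:ℝ)) ≠ 0 := by linarith
    have h1 : ((3 * (p.1.2:ℝ) - 1 + p.1.1) / (1 + 2 * p.1.1)) = 1 := by
      rw [hnum, div_self hden]
    have h2 : (3 * (p.1.2:ℝ) - 2 - p.1.1) = 0 := by rw [heq]; ring
    rw [h1, h2, pI_one, pI_zero, p.2.2.2]
    exact (h.apply_zero _).symm
  · intro p heq
    have hps : (0:ℝ) ≤ p.1.1 := p.1.1.2.1
    have hle : (p.1.2 : ℝ) ≤ (2 + p.1.1) / 3 := by rw [heq]; linarith
    rw [if_pos hle]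
    have h1 : ((p.1.1:ℝ) + 3 * p.1.2) = 1 := by rw [heq]; ring
    have h2 : (3 * (p.1.2:ℝ) - 1 + p.1.1) = 0 := by rw [heq]; ring
    rw [h1, h2, zero_div, pI_one, pI_zero, p.2.2.1]
    exact D.hg.apply_one _

lemma Wfun_left (s : I) (z : HPB (ganea ι n).g ι) :
    Wfun h D s 0 z = D.hg (s, HPB.fst (ganea ι n).g ι z) := by
  have hs1 : (s : ℝ) ≤ 1 := s.2.2
  simp only [Wfun]
  rw [if_pos (show ((0:I) : ℝ) ≤ (1 - (s:ℝ)) / 3 by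
    rw [show ((0:I):ℝ) = 0 from rfl]; linarith)]
  rw [show ((s:ℝ) + 3 * ((0:I):ℝ)) = (s:ℝ) by rw [show ((0:I):ℝ) = 0 from rfl]; ring, pI_val]

lemma Wfun_right (s : I) (z : HPB (ganea ι n).g ι) :
    Wfun h D s 1 z = h (σ s, HPB.snd (ganea ι n).g ι z) := by
  have hs0 : (0:ℝ) ≤ s := s.2.1
  have hs1 : (s : ℝ) ≤ 1 := s.2.2
  have h1 : ((1:I):ℝ) = 1 := rfl
  simp only [Wfun]
  rw [if_neg (by rw [h1]; intro hc; linarith)]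
  by_cases hs : ((1:I):ℝ) ≤ (2 + (s:ℝ)) / 3
  · have hseq : (s:ℝ) = 1 := by rw [h1] at hs; linarith
    rw [if_pos hs]
    have e1 : ((3 * ((1:I):ℝ) - 1 + s) / (1 + 2 * s)) = 1 := by
      rw [h1, hseq]; norm_num
    have e2 : σ s = 0 := by
      apply Subtype.ext; rw [show ((σ s :I):ℝ) = 1 - s from rfl, hseq]
      norm_num
    rw [e1, pI_one, z.2.2, e2]
    exact (h.apply_zero _).symm
  · rw [if_neg hs]
    have e1 : (3 * ((1:I):ℝ) - 2 - s) = 1 - s := by rw [h1]; ring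
    have e2 : pI (1 - (s:ℝ)) = σ s := by
      rw [pI_mem ⟨by linarith, by linarith⟩]; rfl
    rw [e1, e2]

lemma Wfun_one (u : I) (z : HPB (ganea ι n).g ι) :
    Wfun h D 1 u z = φ (z.1.2.1 u) := by
  have hu0 : (0:ℝ) ≤ u := u.2.1
  have hu1 : (u : ℝ) ≤ 1 := u.2.2
  have h1 : ((1:I):ℝ) = 1 := rfl
  simp only [Wfun]
  by_cases hc : (u:ℝ) ≤ (1 - ((1:I):ℝ)) / 3
  · rw [if_pos hc]
    have hu : (u:ℝ) = 0 := by rw [h1] at hc; linarith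
    have e1 : (((1:I):ℝ) + 3 * u) = 1 := by rw [h1, hu]; ring
    have e2 : (u:I) = 0 := Subtype.ext hu
    rw [e1, pI_one, D.hg.apply_one, e2, z.2.1]
    rfl
  · rw [if_neg hc, if_pos (show (u:ℝ) ≤ (2 + ((1:I):ℝ)) / 3 by rw [h1]; linarith)]
    have e1 : ((3 * (u:ℝ) - 1 + 1) / (1 + 2 * 1)) = u := by ring
    rw [h1, e1, pI_val]

/-- The induced map on homotopy pullbacks, parameterized path component. -/
def Vmap : C(HPB (ganea ι n).g ι, C(I, Y)) :=
  ContinuousMap.curry ⟨fun p : HPB (ganea ι n).g ι × I => Wfun h D 0 p.2 p.1,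
    (continuous_Wfun h D).comp ((continuous_const.prodMk continuous_snd).prodMk
      continuous_fst)⟩

/-- The induced map on homotopy pullbacks. -/
def ψmap : C(HPB (ganea ι n).g ι, HPB (ganea ι' n).g ι') :=
  ⟨fun z => ⟨(D.Φ (HPB.fst (ganea ι n).g ι z), (Vmap h D z, HPB.snd (ganea ι n).g ι z)),
    ⟨by
      show Wfun h D 0 0 z = _
      rw [Wfun_left]
      exact D.hg.apply_zero _,
     by
      show Wfun h D 0 1 z = _
      rw [Wfun_right, unitInterval.symm_zero]
      exact h.apply_one _⟩⟩,
   by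
    apply Continuous.subtype_mk
    exact (D.Φ.continuous.comp (HPB.fst (ganea ι n).g ι).continuous).prodMk
      ((Vmap h D).continuous.prodMk (HPB.snd (ganea ι n).g ι).continuous)⟩

/-- The induced map on the next Ganea stage. -/
def stepΦ : C((ganea ι (n+1)).G, (ganea ι' (n+1)).G) :=
  HPO.map (HPB.snd (ganea ι n).g ι) (HPB.fst (ganea ι n).g ι)
    (HPB.snd (ganea ι' n).g ι') (HPB.fst (ganea ι' n).g ι')
    (ψmap h D) (ContinuousMap.id A) D.Φ (fun _ => rfl) (fun _ => rfl)

def KAmap : C(A, C(I, Y)) :=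
  ContinuousMap.curry ⟨fun p : A × I => h (σ p.2, p.1),
    h.continuous.comp ((unitInterval.continuous_symm.comp continuous_snd).prodMk
      continuous_fst)⟩

def KBmap : C((ganea ι n).G, C(I, Y)) :=
  ContinuousMap.curry ⟨fun p : (ganea ι n).G × I => D.hg (p.2, p.1),
    D.hg.continuous.comp (continuous_snd.prodMk continuous_fst)⟩

def KCmap : C((HPB (ganea ι n).g ι × I), C(I, Y)) :=
  ContinuousMap.curry ⟨fun p : (HPB (ganea ι n).g ι × I) × I => Wfun h D p.2 (σ p.1.2) p.1.1,
    (continuous_Wfun h D).comp ((continuous_snd.prodMk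
      (unitInterval.continuous_symm.comp (continuous_snd.comp continuous_fst))).prodMk
      (continuous_fst.comp continuous_fst))⟩

def Kmap : C((ganea ι (n+1)).G, C(I, Y)) :=
  ⟨Quot.lift (Sum.elim (KAmap h) (Sum.elim (KCmap h D) (KBmap D)))
    (by
      rintro x y (⟨z⟩ | ⟨z⟩)
      · simp only [Sum.elim_inl, Sum.elim_inr]
        apply ContinuousMap.ext; intro s
        show h (σ s, _) = Wfun h D s (σ 0) z
        rw [unitInterval.symm_zero, Wfun_right]
      · simp only [Sum.elim_inl, Sum.elim_inr]
        apply ContinuousMap.ext; intro s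
        show Wfun h D s (σ 1) z = D.hg (s, _)
        rw [unitInterval.symm_one, Wfun_left]),
   continuous_quot_lift _ (by
      apply Continuous.sumElim (KAmap h).continuous
      exact Continuous.sumElim (KCmap h D).continuous (KBmap D).continuous)⟩

lemma stepΦ_inl (a : A) : stepΦ h D ((HPO.inl (HPB.snd (ganea ι n).g ι)
    (HPB.fst (ganea ι n).g ι)) a) =
    (HPO.inl (HPB.snd (ganea ι' n).g ι') (HPB.fst (ganea ι' n).g ι')) a := rfl

lemma stepΦ_inr (b : (ganea ι n).G) : stepΦ h D ((HPO.inr (HPB.snd (ganea ι n).g ι)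
    (HPB.fst (ganea ι n).g ι)) b) =
    (HPO.inr (HPB.snd (ganea ι' n).g ι') (HPB.fst (ganea ι' n).g ι')) (D.Φ b) := rfl

lemma stepΦ_cyl (z : HPB (ganea ι n).g ι) (t : I) :
    stepΦ h D ((HPO.cyl (HPB.snd (ganea ι n).g ι) (HPB.fst (ganea ι n).g ι)) (z, t)) =
    (HPO.cyl (HPB.snd (ganea ι' n).g ι') (HPB.fst (ganea ι' n).g ι')) (ψmap h D z, t) := rfl

lemma Kmap_inl (a : A) : Kmap h D ((HPO.inl (HPB.snd (ganea ι n).g ι)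
    (HPB.fst (ganea ι n).g ι)) a) = KAmap h a := rfl

lemma Kmap_inr (b : (ganea ι n).G) : Kmap h D ((HPO.inr (HPB.snd (ganea ι n).g ι)
    (HPB.fst (ganea ι n).g ι)) b) = KBmap D b := rfl

lemma Kmap_cyl (z : HPB (ganea ι n).g ι) (t : I) :
    Kmap h D ((HPO.cyl (HPB.snd (ganea ι n).g ι) (HPB.fst (ganea ι n).g ι)) (z, t)) =
    KCmap h D (z, t) := rfl

lemma KAmap_apply (a : A) (s : I) : KAmap h a s = h (σ s, a) := rfl
lemma KBmap_apply (b : (ganea ι n).G) (s : I) : KBmap D b s = D.hg (s, b) := rfl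
lemma KCmap_apply (z : HPB (ganea ι n).g ι) (t s : I) :
    KCmap h D (z, t) s = Wfun h D s (σ t) z := rfl

section GaneaEval

variable {A' X' : Type u} [TopologicalSpace A'] [TopologicalSpace X'] (κ : C(A', X')) {m : ℕ}

lemma ganea_succ_g_inl (a : A') : (ganea κ (m+1)).g ((HPO.inl (HPB.snd (ganea κ m).g κ)
    (HPB.fst (ganea κ m).g κ)) a) = κ a := rfl

lemma ganea_succ_g_inr (b : (ganea κ m).G) : (ganea κ (m+1)).g
    ((HPO.inr (HPB.snd (ganea κ m).g κ) (HPB.fst (ganea κ m).g κ)) b) = (ganea κ m).g b := rfl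

lemma ganea_succ_g_cyl (z : HPB (ganea κ m).g κ) (t : I) : (ganea κ (m+1)).g
    ((HPO.cyl (HPB.snd (ganea κ m).g κ) (HPB.fst (ganea κ m).g κ)) (z, t)) =
    z.1.2.1 (σ t) := rfl

lemma ganea_succ_α_apply (a : A') : (ganea κ (m+1)).α a =
    (HPO.inl (HPB.snd (ganea κ m).g κ) (HPB.fst (ganea κ m).g κ)) a := rfl

end GaneaEval

/-- The comparison homotopy at the next Ganea stage. -/
def stepHg : ContinuousMap.Homotopy ((ganea ι' (n+1)).g.comp (stepΦ h D))
    (φ.comp (ganea ι (n+1)).g) where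
  toFun := fun p => Kmap h D p.2 p.1
  continuous_toFun := by
    have hc : Continuous fun q : (ganea ι (n+1)).G × I => Kmap h D q.1 q.2 :=
      ((Kmap h D).uncurry).continuous
    exact hc.comp (continuous_snd.prodMk continuous_fst)
  map_zero_left := by
    refine HPO.ind ?_ ?_ ?_
    · intro a
      show Kmap h D (HPO.inl (HPB.snd (ganea ι n).g ι) (HPB.fst (ganea ι n).g ι) a) 0 = (ganea ι' (n+1)).g (stepΦ h D (HPO.inl (HPB.snd (ganea ι n).g ι) (HPB.fst (ganea ι n).g ι) a))
      rw [Kmap_inl, KAmap_apply, stepΦ_inl, ganea_succ_g_inl,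
        unitInterval.symm_zero]
      exact h.apply_one a
    · intro z t
      show Kmap h D (HPO.cyl (HPB.snd (ganea ι n).g ι) (HPB.fst (ganea ι n).g ι) (z, t)) 0 = (ganea ι' (n+1)).g (stepΦ h D (HPO.cyl (HPB.snd (ganea ι n).g ι) (HPB.fst (ganea ι n).g ι) (z, t)))
      rw [Kmap_cyl, KCmap_apply, stepΦ_cyl, ganea_succ_g_cyl]
      rfl
    · intro b
      show Kmap h D (HPO.inr (HPB.snd (ganea ι n).g ι) (HPB.fst (ganea ι n).g ι) b) 0 = (ganea ι' (n+1)).g (stepΦ h D (HPO.inr (HPB.snd (ganea ι n).g ι) (HPB.fst (ganea ι n).g ι) b))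
      rw [Kmap_inr, KBmap_apply, stepΦ_inr, ganea_succ_g_inr]
      exact D.hg.apply_zero b
  map_one_left := by
    refine HPO.ind ?_ ?_ ?_
    · intro a
      show Kmap h D _ 1 = φ ((ganea ι (n+1)).g _)
      rw [Kmap_inl, KAmap_apply, ganea_succ_g_inl,
        unitInterval.symm_one]
      exact h.apply_zero a
    · intro z t
      show Kmap h D _ 1 = φ ((ganea ι (n+1)).g _)
      rw [Kmap_cyl, KCmap_apply, ganea_succ_g_cyl]
      exact Wfun_one h D (σ t) z
    · intro b
      show Kmap h D _ 1 = φ ((ganea ι (n+1)).g _)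
      rw [Kmap_inr, KBmap_apply, ganea_succ_g_inr]
      exact D.hg.apply_one b

/-- Functoriality of the Ganea construction. -/
def ganeaMap (h : ContinuousMap.Homotopy (φ.comp ι) ι') : ∀ n, GaneaMapData ι ι' φ n
  | 0 =>
    { Φ := ContinuousMap.id A
      hg := h.symm.cast (by apply ContinuousMap.ext; intro a; rfl) rfl
      hα := fun _ => rfl }
  | n + 1 =>
    { Φ := stepΦ h (ganeaMap h n)
      hg := stepHg h (ganeaMap h n)
      hα := fun _ => rfl }

end Functoriality
noncomputable section Transfer
open ContinuousMap

variable {A X Y : Type u} [TopologicalSpace A] [TopologicalSpace X] [TopologicalSpace Y]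
variable {ιX : C(A, X)} {ιY : C(A, Y)} {n : ℕ}

lemma secatLe_transfer (φ : C(X, Y)) (s : C(Y, X)) (h1 : (φ.comp ιX).Homotopic ιY)
    (h2 : (φ.comp s).Homotopic (ContinuousMap.id Y)) (h : secatLe ιX n) : secatLe ιY n := by
  obtain ⟨σ₀, hσ⟩ := h
  have D := ganeaMap h1.some n
  refine ⟨D.Φ.comp (σ₀.comp s), ?_⟩
  have step1 : ((ganea ιY n).g.comp (D.Φ.comp (σ₀.comp s))).Homotopic
      ((φ.comp (ganea ιX n).g).comp (σ₀.comp s)) :=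
    Homotopic.comp ⟨D.hg⟩ (Homotopic.refl (σ₀.comp s))
  refine step1.trans ?_
  have step2 : ((φ.comp (ganea ιX n).g).comp (σ₀.comp s)).Homotopic
      ((φ.comp (ContinuousMap.id X)).comp s) :=
    Homotopic.comp (Homotopic.comp (Homotopic.refl φ) hσ) (Homotopic.refl s)
  refine step2.trans ?_
  rw [ContinuousMap.comp_id]
  exact h2

lemma relcatLe_transfer (φ : C(X, Y)) (s : C(Y, X)) (h1 : (φ.comp ιX).Homotopic ιY)
    (h2 : (φ.comp s).Homotopic (ContinuousMap.id Y)) (h3 : (s.comp ιY).Homotopic ιX)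
    (h : relcatLe ιX n) : relcatLe ιY n := by
  obtain ⟨σ₀, hσ, hα⟩ := h
  have D := ganeaMap h1.some n
  refine ⟨D.Φ.comp (σ₀.comp s), ?_, ?_⟩
  · have step1 : ((ganea ιY n).g.comp (D.Φ.comp (σ₀.comp s))).Homotopic
        ((φ.comp (ganea ιX n).g).comp (σ₀.comp s)) :=
      Homotopic.comp ⟨D.hg⟩ (Homotopic.refl (σ₀.comp s))
    refine step1.trans ?_
    have step2 : ((φ.comp (ganea ιX n).g).comp (σ₀.comp s)).Homotopic
        ((φ.comp (ContinuousMap.id X)).comp s) :=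
      Homotopic.comp (Homotopic.comp (Homotopic.refl φ) hσ) (Homotopic.refl s)
    refine step2.trans ?_
    rw [ContinuousMap.comp_id]
    exact h2
  · have step1 : ((D.Φ.comp (σ₀.comp s)).comp ιY).Homotopic
        ((D.Φ.comp σ₀).comp ιX) :=
      Homotopic.comp (Homotopic.refl (D.Φ.comp σ₀)) h3
    refine step1.trans ?_
    have step2 : ((D.Φ.comp σ₀).comp ιX).Homotopic (D.Φ.comp (ganea ιX n).α) :=
      Homotopic.comp (Homotopic.refl D.Φ) hα
    refine step2.trans ?_
    rw [show D.Φ.comp (ganea ιX n).α = (ganea ιY n).α from ContinuousMap.ext D.hα]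

end Transfer
noncomputable section StepLemma
open ContinuousMap Set

variable {Z A X : Type u} [TopologicalSpace Z] [TopologicalSpace A] [TopologicalSpace X]
variable (ρ : C(Z, A)) (τ : C(Z, X)) {n : ℕ}
variable (σ₁ : C(X, (ganea (HPO.inl ρ τ) n).G))
variable (Hσ : ContinuousMap.Homotopy ((ganea (HPO.inl ρ τ) n).g.comp σ₁) (HPO.inr ρ τ))

/-- Concatenated path from `g (σ₁ (τ z))` to `inl (ρ z)` in the homotopy pushout. -/
def ηmap : C(Z × I, HPO ρ τ) :=
  ⟨fun zu => if (zu.2 : ℝ) ≤ 1 / 2 then Hσ (pI (2 * zu.2), τ zu.1)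
    else HPO.cyl ρ τ (zu.1, pI (2 - 2 * zu.2)), by
    refine Continuous.if_le ?_ ?_ (by fun_prop) continuous_const ?_
    · exact Hσ.continuous.comp ((continuous_pI.comp (by fun_prop)).prodMk
        (τ.continuous.comp continuous_fst))
    · exact (HPO.cyl ρ τ).continuous.comp (continuous_fst.prodMk
        (continuous_pI.comp (by fun_prop)))
    · intro p heq
      have e1 : (2 * (p.2 : ℝ)) = 1 := by rw [heq]; ring
      have e2 : (2 - 2 * (p.2 : ℝ)) = 1 := by rw [heq]; ring
      rw [e2, e1, pI_one, Hσ.apply_one]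
      exact (HPO.cyl_one ρ τ p.1).symm⟩

/-- The induced map `Z → HPB` for the section construction. -/
def wmap : C(Z, HPB (ganea (HPO.inl ρ τ) n).g (HPO.inl ρ τ)) :=
  ⟨fun z => ⟨(σ₁ (τ z), ((ContinuousMap.curry (ηmap ρ τ σ₁ Hσ)) z, ρ z)),
    ⟨by
      show ηmap ρ τ σ₁ Hσ (z, 0) = _
      simp only [ηmap, ContinuousMap.coe_mk]
      rw [if_pos (show ((0:I):ℝ) ≤ 1/2 by rw [show ((0:I):ℝ) = 0 from rfl]; norm_num)]
      rw [show (2 * ((0:I):ℝ)) = 0 by rw [show ((0:I):ℝ) = 0 from rfl]; ring, pI_zero]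
      exact Hσ.apply_zero (τ z),
     by
      show ηmap ρ τ σ₁ Hσ (z, 1) = _
      simp only [ηmap, ContinuousMap.coe_mk]
      rw [if_neg (show ¬ (((1:I):ℝ) ≤ 1/2) by rw [show ((1:I):ℝ) = 1 from rfl]; norm_num)]
      rw [show (2 - 2 * ((1:I):ℝ)) = 0 by rw [show ((1:I):ℝ) = 1 from rfl]; ring, pI_zero]
      exact HPO.cyl_zero ρ τ z⟩⟩, by
    apply Continuous.subtype_mk
    exact (σ₁.continuous.comp τ.continuous).prodMk
      (((ContinuousMap.curry (ηmap ρ τ σ₁ Hσ)).continuous).prodMk ρ.continuous)⟩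

/-- The section of the next Ganea map over the homotopy pushout. -/
def sectmap : C(HPO ρ τ, (ganea (HPO.inl ρ τ) (n+1)).G) :=
  ⟨Quot.lift (Sum.elim
      (fun a => HPO.inl (HPB.snd (ganea (HPO.inl ρ τ) n).g (HPO.inl ρ τ))
        (HPB.fst (ganea (HPO.inl ρ τ) n).g (HPO.inl ρ τ)) a)
      (Sum.elim
        (fun zt => HPO.cyl (HPB.snd (ganea (HPO.inl ρ τ) n).g (HPO.inl ρ τ))
          (HPB.fst (ganea (HPO.inl ρ τ) n).g (HPO.inl ρ τ)) (wmap ρ τ σ₁ Hσ zt.1, zt.2))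
        (fun x => HPO.inr (HPB.snd (ganea (HPO.inl ρ τ) n).g (HPO.inl ρ τ))
          (HPB.fst (ganea (HPO.inl ρ τ) n).g (HPO.inl ρ τ)) (σ₁ x))))
    (by
      rintro x y (⟨z⟩ | ⟨z⟩)
      · exact (HPO.cyl_zero _ _ (wmap ρ τ σ₁ Hσ z)).symm
      · exact HPO.cyl_one _ _ (wmap ρ τ σ₁ Hσ z)),
   continuous_quot_lift _ (by
      apply Continuous.sumElim ((HPO.inl _ _).continuous)
      apply Continuous.sumElim
      · exact (HPO.cyl _ _).continuous.comp
          (((wmap ρ τ σ₁ Hσ).continuous.comp continuous_fst).prodMk continuous_snd)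
      · exact (HPO.inr _ _).continuous.comp σ₁.continuous)⟩

/-- The deformation showing that `sectmap` is a homotopy section. -/
def Mfun (s t : I) (z : Z) : HPO ρ τ :=
  if (t : ℝ) ≤ (1 + s) / 2 then HPO.cyl ρ τ (z, pI (2 * t / (1 + s)))
  else Hσ (pI (2 + s - 2 * t), τ z)

lemma continuous_Mfun : Continuous fun p : (I × I) × Z => Mfun ρ τ σ₁ Hσ p.1.1 p.1.2 p.2 := by
  refine Continuous.if_le ?_ ?_ (by fun_prop) (by fun_prop) ?_
  · refine (HPO.cyl ρ τ).continuous.comp (continuous_snd.prodMk (continuous_pI.comp ?_))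
    refine Continuous.div (by fun_prop) (by fun_prop) (fun p => ?_)
    have := p.1.1.2.1
    intro hc; linarith
  · exact Hσ.continuous.comp ((continuous_pI.comp (by fun_prop)).prodMk
      (τ.continuous.comp continuous_snd))
  · intro p heq
    have hs0 : (0:ℝ) ≤ p.1.1 := p.1.1.2.1
    have e1 : (2 * (p.1.2:ℝ) / (1 + p.1.1)) = 1 := by
      rw [heq]; field_simp
    have e2 : (2 + (p.1.1:ℝ) - 2 * p.1.2) = 1 := by rw [heq]; ring
    rw [e1, e2, pI_one, Hσ.apply_one]
    exact HPO.cyl_one ρ τ p.2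

lemma Mfun_zero (t : I) (z : Z) : Mfun ρ τ σ₁ Hσ 0 t z = ηmap ρ τ σ₁ Hσ (z, σ t) := by
  have h0 : ((0:I):ℝ) = 0 := rfl
  have hσt : ((σ t : I):ℝ) = 1 - t := rfl
  have ht0 : (0:ℝ) ≤ t := t.2.1
  have ht1 : (t:ℝ) ≤ 1 := t.2.2
  simp only [Mfun, ηmap, ContinuousMap.coe_mk]
  by_cases h1 : (t:ℝ) ≤ 1/2
  · rw [if_pos (by rw [h0]; norm_num; linarith)]
    by_cases h2 : ((σ t : I):ℝ) ≤ 1/2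
    · -- t = 1/2
      have ht : (t:ℝ) = 1/2 := by rw [hσt] at h2; linarith
      rw [if_pos h2]
      have e1 : (2 * (t:ℝ) / (1 + ((0:I):ℝ))) = 1 := by rw [h0, ht]; norm_num
      have e2 : (2 * ((σ t : I):ℝ)) = 1 := by rw [hσt, ht]; norm_num
      rw [e1, e2, pI_one, Hσ.apply_one]
      exact HPO.cyl_one ρ τ z
    · rw [if_neg h2]
      have e1 : (2 * (t:ℝ) / (1 + ((0:I):ℝ))) = 2 - 2 * ((σ t : I):ℝ) := by
        rw [h0, hσt]; ring
      rw [e1]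
  · rw [if_neg (by rw [h0]; norm_num; linarith)]
    rw [if_pos (by rw [hσt]; linarith)]
    have e1 : (2 + ((0:I):ℝ) - 2 * t) = 2 * ((σ t : I):ℝ) := by rw [h0, hσt]; ring
    rw [e1]

lemma Mfun_one (t : I) (z : Z) : Mfun ρ τ σ₁ Hσ 1 t z = HPO.cyl ρ τ (z, t) := by
  have h1 : ((1:I):ℝ) = 1 := rfl
  have ht1 : (t:ℝ) ≤ 1 := t.2.2
  simp only [Mfun]
  rw [if_pos (by rw [h1]; norm_num; linarith)]
  have e1 : (2 * (t:ℝ) / (1 + ((1:I):ℝ))) = t := by rw [h1]; ring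
  rw [e1, pI_val]

def LAmap : C(A, C(I, HPO ρ τ)) :=
  ContinuousMap.curry ⟨fun p : A × I => HPO.inl ρ τ p.1,
    (HPO.inl ρ τ).continuous.comp continuous_fst⟩

def LBmap : C(X, C(I, HPO ρ τ)) :=
  ContinuousMap.curry ⟨fun p : X × I => Hσ (p.2, p.1),
    Hσ.continuous.comp (continuous_snd.prodMk continuous_fst)⟩

def LCmap : C(Z × I, C(I, HPO ρ τ)) :=
  ContinuousMap.curry ⟨fun p : (Z × I) × I => Mfun ρ τ σ₁ Hσ p.2 p.1.2 p.1.1,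
    (continuous_Mfun ρ τ σ₁ Hσ).comp ((continuous_snd.prodMk
      (continuous_snd.comp continuous_fst)).prodMk (continuous_fst.comp continuous_fst))⟩

def Lmap : C(HPO ρ τ, C(I, HPO ρ τ)) :=
  ⟨Quot.lift (Sum.elim (LAmap ρ τ) (Sum.elim (LCmap ρ τ σ₁ Hσ) (LBmap ρ τ σ₁ Hσ)))
    (by
      rintro x y (⟨z⟩ | ⟨z⟩)
      · simp only [Sum.elim_inl, Sum.elim_inr]
        apply ContinuousMap.ext; intro s
        show HPO.inl ρ τ (ρ z) = Mfun ρ τ σ₁ Hσ s 0 z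
        simp only [Mfun]
        have hs0 : (0:ℝ) ≤ s := s.2.1
        rw [if_pos (by rw [show ((0:I):ℝ) = 0 from rfl]; linarith)]
        rw [show (2 * ((0:I):ℝ) / (1 + (s:ℝ))) = 0 by
          rw [show ((0:I):ℝ) = 0 from rfl]; ring, pI_zero]
        exact (HPO.cyl_zero ρ τ z).symm
      · simp only [Sum.elim_inl, Sum.elim_inr]
        apply ContinuousMap.ext; intro s
        show Mfun ρ τ σ₁ Hσ s 1 z = Hσ (s, τ z)
        simp only [Mfun]
        have hs0 : (0:ℝ) ≤ s := s.2.1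
        have hs1 : (s:ℝ) ≤ 1 := s.2.2
        have h1 : ((1:I):ℝ) = 1 := rfl
        by_cases hc : ((1:I):ℝ) ≤ (1 + (s:ℝ))/2
        · have hs : (s:ℝ) = 1 := by rw [h1] at hc; linarith
          rw [if_pos hc]
          have e1 : (2 * ((1:I):ℝ) / (1 + (s:ℝ))) = 1 := by rw [h1, hs]; norm_num
          rw [e1, pI_one]
          have e2 : s = 1 := Subtype.ext (by rw [hs]; rfl)
          rw [e2, Hσ.apply_one]
          exact HPO.cyl_one ρ τ z
        · rw [if_neg hc]
          have e1 : (2 + (s:ℝ) - 2 * ((1:I):ℝ)) = s := by rw [h1]; ring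
          rw [e1, pI_val]),
   continuous_quot_lift _ (by
      apply Continuous.sumElim (LAmap ρ τ).continuous
      exact Continuous.sumElim (LCmap ρ τ σ₁ Hσ).continuous (LBmap ρ τ σ₁ Hσ).continuous)⟩

lemma Lmap_inl (a : A) : Lmap ρ τ σ₁ Hσ (HPO.inl ρ τ a) = LAmap ρ τ a := rfl
lemma Lmap_inr (x : X) : Lmap ρ τ σ₁ Hσ (HPO.inr ρ τ x) = LBmap ρ τ σ₁ Hσ x := rfl
lemma Lmap_cyl (z : Z) (t : I) : Lmap ρ τ σ₁ Hσ (HPO.cyl ρ τ (z, t)) = LCmap ρ τ σ₁ Hσ (z, t) := rfl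
lemma LAmap_apply (a : A) (s : I) : LAmap ρ τ a s = HPO.inl ρ τ a := rfl
lemma LBmap_apply (x : X) (s : I) : LBmap ρ τ σ₁ Hσ x s = Hσ (s, x) := rfl
lemma LCmap_apply (z : Z) (t s : I) : LCmap ρ τ σ₁ Hσ (z, t) s = Mfun ρ τ σ₁ Hσ s t z := rfl

lemma sectmap_inl (a : A) : sectmap ρ τ σ₁ Hσ (HPO.inl ρ τ a) =
    HPO.inl (HPB.snd (ganea (HPO.inl ρ τ) n).g (HPO.inl ρ τ))
      (HPB.fst (ganea (HPO.inl ρ τ) n).g (HPO.inl ρ τ)) a := rfl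
lemma sectmap_inr (x : X) : sectmap ρ τ σ₁ Hσ (HPO.inr ρ τ x) =
    HPO.inr (HPB.snd (ganea (HPO.inl ρ τ) n).g (HPO.inl ρ τ))
      (HPB.fst (ganea (HPO.inl ρ τ) n).g (HPO.inl ρ τ)) (σ₁ x) := rfl
lemma sectmap_cyl (z : Z) (t : I) : sectmap ρ τ σ₁ Hσ (HPO.cyl ρ τ (z, t)) =
    HPO.cyl (HPB.snd (ganea (HPO.inl ρ τ) n).g (HPO.inl ρ τ))
      (HPB.fst (ganea (HPO.inl ρ τ) n).g (HPO.inl ρ τ)) (wmap ρ τ σ₁ Hσ z, t) := rfl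

/-- `sectmap` is a homotopy section. -/
def Lhomotopy : ContinuousMap.Homotopy
    ((ganea (HPO.inl ρ τ) (n+1)).g.comp (sectmap ρ τ σ₁ Hσ)) (ContinuousMap.id (HPO ρ τ)) where
  toFun := fun p => Lmap ρ τ σ₁ Hσ p.2 p.1
  continuous_toFun := by
    have hc : Continuous fun q : HPO ρ τ × I => Lmap ρ τ σ₁ Hσ q.1 q.2 :=
      ((Lmap ρ τ σ₁ Hσ).uncurry).continuous
    exact hc.comp (continuous_snd.prodMk continuous_fst)
  map_zero_left := by
    refine HPO.ind ?_ ?_ ?_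
    · intro a
      show Lmap ρ τ σ₁ Hσ _ 0 = ((ganea (HPO.inl ρ τ) (n+1)).g.comp (sectmap ρ τ σ₁ Hσ)) _
      rw [Lmap_inl, LAmap_apply, ContinuousMap.comp_apply, sectmap_inl, ganea_succ_g_inl]
    · intro z t
      show Lmap ρ τ σ₁ Hσ _ 0 = ((ganea (HPO.inl ρ τ) (n+1)).g.comp (sectmap ρ τ σ₁ Hσ)) _
      rw [Lmap_cyl, LCmap_apply, ContinuousMap.comp_apply, sectmap_cyl, ganea_succ_g_cyl,
        Mfun_zero]
      rfl
    · intro x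
      show Lmap ρ τ σ₁ Hσ _ 0 = ((ganea (HPO.inl ρ τ) (n+1)).g.comp (sectmap ρ τ σ₁ Hσ)) _
      rw [Lmap_inr, LBmap_apply, ContinuousMap.comp_apply, sectmap_inr, ganea_succ_g_inr]
      exact Hσ.apply_zero x
  map_one_left := by
    refine HPO.ind ?_ ?_ ?_
    · intro a
      show Lmap ρ τ σ₁ Hσ _ 1 = ContinuousMap.id _ _
      rw [Lmap_inl, LAmap_apply]
      rfl
    · intro z t
      show Lmap ρ τ σ₁ Hσ _ 1 = ContinuousMap.id _ _
      rw [Lmap_cyl, LCmap_apply, Mfun_one]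
      rfl
    · intro x
      show Lmap ρ τ σ₁ Hσ _ 1 = ContinuousMap.id _ _
      rw [Lmap_inr, LBmap_apply, Hσ.apply_one]
      rfl

/-- The key step: a homotopy pushout raises the relative category by at most one. -/
lemma relcatLe_hpo_step (ι : C(A, X)) {n : ℕ}
    (hι : ((HPO.inr ρ τ).comp ι).Homotopic (HPO.inl ρ τ))
    (h : relcatLe ι n) : relcatLe (HPO.inl ρ τ) (n + 1) := by
  obtain ⟨σ₀, hσg, hσα⟩ := h
  have D := ganeaMap hι.some n
  have hσ₁ : (((ganea (HPO.inl ρ τ) n).g.comp (D.Φ.comp σ₀))).Homotopic (HPO.inr ρ τ) := by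
    have step1 : ((ganea (HPO.inl ρ τ) n).g.comp (D.Φ.comp σ₀)).Homotopic
        (((HPO.inr ρ τ).comp (ganea ι n).g).comp σ₀) :=
      Homotopic.comp ⟨D.hg⟩ (Homotopic.refl σ₀)
    refine step1.trans ?_
    have step2 : (((HPO.inr ρ τ).comp (ganea ι n).g).comp σ₀).Homotopic
        ((HPO.inr ρ τ).comp (ContinuousMap.id X)) :=
      Homotopic.comp (Homotopic.refl (HPO.inr ρ τ)) hσg
    refine step2.trans ?_
    rw [ContinuousMap.comp_id]
  refine ⟨sectmap ρ τ (D.Φ.comp σ₀) hσ₁.some, ⟨Lhomotopy ρ τ (D.Φ.comp σ₀) hσ₁.some⟩, ?_⟩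
  rw [show (sectmap ρ τ (D.Φ.comp σ₀) hσ₁.some).comp (HPO.inl ρ τ) =
      (ganea (HPO.inl ρ τ) (n+1)).α from ContinuousMap.ext fun a =>
        (sectmap_inl ρ τ (D.Φ.comp σ₀) hσ₁.some a).trans
          (ganea_succ_α_apply (HPO.inl ρ τ) a).symm]

end StepLemma
noncomputable section MainLemmas
open ContinuousMap Set

variable {A X : Type u} [TopologicalSpace A] [TopologicalSpace X]

/-- Relative category is at most the strong pushout category. -/
lemma relcatLe_of_pushcatLe {X : Type u} {tX : TopologicalSpace X} {ι : @ContinuousMap A X _ tX}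
    {n : ℕ} (h : PushcatLe A X tX ι n) : relcatLe ι n := by
  induction h with
  | equiv ι hι =>
    obtain ⟨g, h1, h2⟩ := hι
    exact ⟨g, h1, h2⟩
  | @step X X' Z tX tX' tZ ι m h ρ τ ι' χ hpo hχ ih =>
    obtain ⟨H, e', he1, he2⟩ := hpo
    set e := HPO.desc ρ τ ι' χ H with he
    have hel : e.comp (HPO.inl ρ τ) = ι' := ContinuousMap.ext fun a => rfl
    have her : e.comp (HPO.inr ρ τ) = χ := ContinuousMap.ext fun x => rfl
    have base1 : ((HPO.inr ρ τ).comp ι).Homotopic (e'.comp (e.comp ((HPO.inr ρ τ).comp ι))) := by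
      have h0 := ContinuousMap.Homotopic.comp he2.symm (ContinuousMap.Homotopic.refl ((HPO.inr ρ τ).comp ι))
      rwa [ContinuousMap.id_comp] at h0
    have base2 : (HPO.inl ρ τ).Homotopic (e'.comp (e.comp (HPO.inl ρ τ))) := by
      have h0 := ContinuousMap.Homotopic.comp he2.symm (ContinuousMap.Homotopic.refl (HPO.inl ρ τ))
      rwa [ContinuousMap.id_comp] at h0
    have hmid : e.comp ((HPO.inr ρ τ).comp ι) = χ.comp ι := ContinuousMap.ext fun a => rfl
    have hι : ((HPO.inr ρ τ).comp ι).Homotopic (HPO.inl ρ τ) := by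
      refine base1.trans ?_
      rw [hmid]
      refine (ContinuousMap.Homotopic.comp (ContinuousMap.Homotopic.refl e') hχ).trans ?_
      rw [← hel]
      exact base2.symm
    have h1 := relcatLe_hpo_step ρ τ ι hι ih
    refine relcatLe_transfer e e' ?_ he1 ?_ h1
    · rw [hel]
    · rw [← hel]
      exact base2.symm
  | homotopic h hh ih =>
    refine relcatLe_transfer (ContinuousMap.id _) (ContinuousMap.id _) ?_ ?_ ?_ ih
    · rw [ContinuousMap.id_comp]; exact hh
    · rw [ContinuousMap.id_comp]
    · rw [ContinuousMap.id_comp]; exact hh.symm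

/-- The canonical homotopy `inr ∘ αₙ ≃ α_{n+1}` in the Ganea construction. -/
def jmap (ι : C(A, X)) (n : ℕ) : C(A, HPB (ganea ι n).g ι) :=
  ⟨fun a => ⟨((ganea ι n).α a,
      ((ContinuousMap.curry ⟨fun p : A × I => ι p.1, ι.continuous.comp continuous_fst⟩) a, a)),
    ⟨(ContinuousMap.congr_fun (ganea_g_comp_α ι n) a).symm, rfl⟩⟩, by
    apply Continuous.subtype_mk
    exact (ganea ι n).α.continuous.prodMk
      ((ContinuousMap.curry ⟨fun p : A × I => ι p.1,
        ι.continuous.comp continuous_fst⟩).continuous.prodMk continuous_id)⟩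

def ganeaStepHtpy (ι : C(A, X)) (n : ℕ) :
    ContinuousMap.Homotopy
      ((HPO.inr (HPB.snd (ganea ι n).g ι) (HPB.fst (ganea ι n).g ι)).comp (ganea ι n).α)
      (HPO.inl (HPB.snd (ganea ι n).g ι) (HPB.fst (ganea ι n).g ι)) where
  toFun := fun p => HPO.cyl (HPB.snd (ganea ι n).g ι) (HPB.fst (ganea ι n).g ι)
    (jmap ι n p.2, σ p.1)
  continuous_toFun := (HPO.cyl _ _).continuous.comp
    (((jmap ι n).continuous.comp continuous_snd).prodMk
      (unitInterval.continuous_symm.comp continuous_fst))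
  map_zero_left := by
    intro a
    show HPO.cyl _ _ (jmap ι n a, σ 0) = _
    rw [unitInterval.symm_zero]
    exact HPO.cyl_one _ _ (jmap ι n a)
  map_one_left := by
    intro a
    show HPO.cyl _ _ (jmap ι n a, σ 1) = _
    rw [unitInterval.symm_one]
    exact HPO.cyl_zero _ _ (jmap ι n a)

/-- The Ganea construction has strong pushout category at most `n` at stage `n`. -/
lemma pushcatLe_ganea (ι : C(A, X)) : ∀ n : ℕ,
    PushcatLe A (ganea ι n).G inferInstance (ganea ι n).α n
  | 0 => PushcatLe.equiv _ ⟨ContinuousMap.id A,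
      ⟨ContinuousMap.Homotopic.refl _, ContinuousMap.Homotopic.refl _⟩⟩
  | n + 1 =>
    PushcatLe.step (pushcatLe_ganea ι n)
      (HPB.snd (ganea ι n).g ι) (HPB.fst (ganea ι n).g ι)
      (ganea ι (n+1)).α (HPO.inr (HPB.snd (ganea ι n).g ι) (HPB.fst (ganea ι n).g ι))
      (isHPO_canon _ _) ⟨ganeaStepHtpy ι n⟩

/-- Characterization of `theNat P ≤ n`. -/
lemma theNat_le_iff (P : ℕ → Prop) (n : ℕ) :
    theNat P ≤ (n : ℕ∞) ↔ ∃ m, m ≤ n ∧ P m := by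
  constructor
  · intro hle
    rcases Set.eq_empty_or_nonempty ((Nat.cast : ℕ → ℕ∞) '' { k | P k }) with hS | hS
    · rw [theNat, hS, sInf_empty, top_le_iff] at hle
      exact absurd hle (ENat.coe_ne_top n)
    · obtain ⟨m, hm, hcast⟩ := csInf_mem hS
      rw [theNat, ← hcast] at hle
      exact ⟨m, Nat.cast_le.mp hle, hm⟩
  · rintro ⟨m, hmn, hPm⟩
    exact le_trans (sInf_le ⟨m, hPm, rfl⟩) (Nat.cast_le.mpr hmn)

end MainLemmas

/-- Characterization of `secat` and `relcat` by domination from maps of bounded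
strong pushout category. -/
theorem secat_relcat_iff_dominated {A Y : Type u} [TopologicalSpace A] [TopologicalSpace Y]
    (ιY : C(A, Y)) (n : ℕ) :
    (secat ιY ≤ (n : ℕ∞) ↔ ∃ (X : Type u) (tX : TopologicalSpace X)
      (ιX : @ContinuousMap A X _ tX), @SimplyDominatedBy A Y X _ _ tX ιY ιX ∧
        @Pushcat A X _ tX ιX ≤ (n : ℕ∞)) ∧
    (relcat ιY ≤ (n : ℕ∞) ↔ ∃ (X : Type u) (tX : TopologicalSpace X)
      (ιX : @ContinuousMap A X _ tX), @RelDominatedBy A Y X _ _ tX ιY ιX ∧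
        @Pushcat A X _ tX ιX ≤ (n : ℕ∞)) := by
  constructor
  · constructor
    · intro hle
      obtain ⟨m, hmn, σ₀, hσ⟩ := (theNat_le_iff (secatLe ιY) n).1 hle
      refine ⟨(ganea ιY m).G, inferInstance, (ganea ιY m).α,
        ⟨(ganea ιY m).g, σ₀, ?_, hσ⟩, ?_⟩
      · rw [ganea_g_comp_α]
      · exact (theNat_le_iff _ n).2 ⟨m, hmn, pushcatLe_ganea ιY m⟩
    · rintro ⟨X, tX, ιX, ⟨φ, s, h1, h2⟩, hp⟩
      obtain ⟨m, hmn, hpush⟩ := (theNat_le_iff _ n).1 hp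
      obtain ⟨σ₀, hσg, -⟩ := relcatLe_of_pushcatLe hpush
      exact (theNat_le_iff (secatLe ιY) n).2
        ⟨m, hmn, secatLe_transfer φ s h1 h2 ⟨σ₀, hσg⟩⟩
  · constructor
    · intro hle
      obtain ⟨m, hmn, σ₀, hσ, hα⟩ := (theNat_le_iff (relcatLe ιY) n).1 hle
      refine ⟨(ganea ιY m).G, inferInstance, (ganea ιY m).α,
        ⟨(ganea ιY m).g, σ₀, ?_, hσ, hα⟩, ?_⟩
      · rw [ganea_g_comp_α]
      · exact (theNat_le_iff _ n).2 ⟨m, hmn, pushcatLe_ganea ιY m⟩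
    · rintro ⟨X, tX, ιX, ⟨φ, s, h1, h2, h3⟩, hp⟩
      obtain ⟨m, hmn, hpush⟩ := (theNat_le_iff _ n).1 hp
      exact (theNat_le_iff (relcatLe ιY) n).2
        ⟨m, hmn, relcatLe_transfer φ s h1 h2 h3 (relcatLe_of_pushcatLe hpush)⟩
end

section
/- If ι_Y : A → Y is simply dominated by ι_X : A → X then secat(ι_Y) ≤ secat(ι_X); if ι_Y is relatively dominated by ι_X then relcat(ι_Y) ≤ relcat(ι_X). -/
open unitInterval

universe u

-- ===================== auxiliary development =====================

noncomputable section Aux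
open ContinuousMap

variable {A Y X GX GY : Type u} [TopologicalSpace A] [TopologicalSpace Y] [TopologicalSpace X]
  [TopologicalSpace GX] [TopologicalSpace GY]
  {ιY : C(A, Y)} {ιX : C(A, X)} {φ : C(X, Y)} {gX : C(GX, X)} {gY : C(GY, Y)} {θ : C(GX, GY)}

/-- clamp to the unit interval -/
def pr (u : ℝ) : I := Set.projIcc 0 1 zero_le_one u

lemma pr_of_mem {u : ℝ} (h : u ∈ Set.Icc (0:ℝ) 1) : pr u = ⟨u, h⟩ := by
  simp [pr, Set.projIcc_of_mem zero_le_one h]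

lemma pr_coe (u : I) : pr (u : ℝ) = u := by
  simp [pr, Set.projIcc_of_mem zero_le_one u.2]

lemma pr_one : pr 1 = 1 := by simpa using pr_coe 1

lemma pr_zero : pr 0 = 0 := by simpa using pr_coe 0

/-- the key concatenated-path family -/
def craw (H : Homotopy (gY.comp θ) (φ.comp gX)) (K : Homotopy (φ.comp ιX) ιY)
    (q : HPB gX ιX) (u : ℝ) : Y :=
  if u ≤ 1/2 then H (pr (2*u), q.1.1)
  else if u ≤ 3/4 then φ (q.1.2.1 (pr (4*u - 2)))
  else K (pr (4*u - 3), q.1.2.2)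

lemma craw_cont (H : Homotopy (gY.comp θ) (φ.comp gX)) (K : Homotopy (φ.comp ιX) ιY) :
    Continuous (fun p : HPB gX ιX × ℝ => craw H K p.1 p.2) := by
  have hq1 : Continuous fun p : HPB gX ιX × ℝ => p.1.1.1 :=
    continuous_fst.comp (continuous_subtype_val.comp continuous_fst)
  have hqP : Continuous fun p : HPB gX ιX × ℝ => p.1.1.2.1 :=
    continuous_fst.comp (continuous_snd.comp (continuous_subtype_val.comp continuous_fst))
  have hqA : Continuous fun p : HPB gX ιX × ℝ => p.1.1.2.2 :=
    continuous_snd.comp (continuous_snd.comp (continuous_subtype_val.comp continuous_fst))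
  have hpr : ∀ c d : ℝ, Continuous fun p : HPB gX ιX × ℝ => pr (c * p.2 + d) := by
    intro c d
    exact continuous_projIcc.comp ((continuous_const.mul continuous_snd).add continuous_const)
  have h2 : Continuous fun p : HPB gX ιX × ℝ => pr (2 * p.2) := by simpa using hpr 2 0
  have h42 : Continuous fun p : HPB gX ιX × ℝ => pr (4 * p.2 - 2) := by
    simpa [sub_eq_add_neg] using hpr 4 (-2)
  have h43 : Continuous fun p : HPB gX ιX × ℝ => pr (4 * p.2 - 3) := by
    simpa [sub_eq_add_neg] using hpr 4 (-3)
  apply Continuous.if_le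
  · exact H.continuous.comp (h2.prodMk hq1)
  · apply Continuous.if_le
    · exact φ.continuous.comp (ContinuousEval.continuous_eval.comp (hqP.prodMk h42))
    · exact K.continuous.comp (h43.prodMk hqA)
    · exact continuous_snd
    · exact continuous_const
    · intro p hp
      rw [hp]
      norm_num
      rw [pr_one, pr_zero, p.1.2.2, K.apply_zero]
      rfl
  · exact continuous_snd
  · exact continuous_const
  · intro p hp
    rw [hp]
    norm_num
    rw [pr_one, pr_zero, H.apply_one, p.1.2.1]
    rfl

lemma craw_zero (H : Homotopy (gY.comp θ) (φ.comp gX)) (K : Homotopy (φ.comp ιX) ιY)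
    (q : HPB gX ιX) : craw H K q ((0:I) : ℝ) = gY (θ q.1.1) := by
  simp only [craw, Set.Icc.coe_zero]
  rw [if_pos (by norm_num), show (2:ℝ) * 0 = 0 by ring, pr_zero, H.apply_zero]
  rfl

lemma craw_one (H : Homotopy (gY.comp θ) (φ.comp gX)) (K : Homotopy (φ.comp ιX) ιY)
    (q : HPB gX ιX) : craw H K q ((1:I) : ℝ) = ιY q.1.2.2 := by
  simp only [craw, Set.Icc.coe_one]
  rw [if_neg (by norm_num), if_neg (by norm_num),
    show (4:ℝ) * 1 - 3 = 1 by ring, pr_one, K.apply_one]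

/-- reparametrization of the square -/
def rho (s v : ℝ) : ℝ := (1-v)*(s/2) + v*(1 - s/4)

lemma rho_cont : Continuous fun p : ℝ × ℝ => rho p.1 p.2 := by
  unfold rho; fun_prop

lemma rho_zero_left (v : ℝ) : rho 0 v = v := by norm_num [rho]

lemma craw_rho_bot (H : Homotopy (gY.comp θ) (φ.comp gX)) (K : Homotopy (φ.comp ιX) ιY)
    (q : HPB gX ιX) (s : I) : craw H K q (rho s 0) = H (s, q.1.1) := by
  have h1 : rho s 0 = (s:ℝ)/2 := by norm_num [rho]
  simp only [craw, h1]
  rw [if_pos (by linarith [s.2.2]), show (2:ℝ) * ((s:ℝ)/2) = s by ring, pr_coe]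

lemma craw_rho_top (H : Homotopy (gY.comp θ) (φ.comp gX)) (K : Homotopy (φ.comp ιX) ιY)
    (q : HPB gX ιX) (s : I) : craw H K q (rho s 1) = K (σ s, q.1.2.2) := by
  have h1 : rho s 1 = 1 - (s:ℝ)/4 := by norm_num [rho]
  simp only [craw, h1]
  rw [if_neg (by nlinarith [s.2.1, s.2.2])]
  by_cases h : (1:ℝ) - (s:ℝ)/4 ≤ 3/4
  · rw [if_pos h]
    have hs : (s:ℝ) = 1 := le_antisymm s.2.2 (by linarith)
    have h3 : σ s = 0 := by
      apply Subtype.ext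
      simp [unitInterval.coe_symm_eq, hs]
    rw [show (4:ℝ)*(1 - (s:ℝ)/4) - 2 = 1 by rw [hs]; ring, pr_one, q.2.2, h3, K.apply_zero]
    rfl
  · rw [if_neg h]
    have h2 : pr (4*(1 - (s:ℝ)/4) - 3) = σ s := by
      apply Subtype.ext
      rw [show (4:ℝ)*(1 - (s:ℝ)/4) - 3 = 1 - s by ring]
      rw [pr_of_mem ⟨by linarith [s.2.2], by linarith [s.2.1]⟩]
      exact (unitInterval.coe_symm_eq s).symm
    rw [h2]

lemma craw_rho_right (H : Homotopy (gY.comp θ) (φ.comp gX)) (K : Homotopy (φ.comp ιX) ιY)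
    (q : HPB gX ιX) (v : I) : craw H K q (rho 1 v) = φ (q.1.2.1 v) := by
  have h1 : rho 1 v = 1/2 + (v:ℝ)/4 := by rw [rho]; ring
  simp only [craw, h1]
  by_cases h : (1:ℝ)/2 + (v:ℝ)/4 ≤ 1/2
  · rw [if_pos h]
    have hv : (v:ℝ) = 0 := le_antisymm (by linarith) v.2.1
    have h3 : v = (0:I) := Subtype.ext hv
    rw [show (2:ℝ)*((1:ℝ)/2 + (v:ℝ)/4) = 1 by rw [hv]; ring, pr_one, H.apply_one, h3, q.2.1]
    rfl
  · rw [if_neg h, if_pos (by linarith [v.2.2])]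
    have h2 : pr (4*((1:ℝ)/2 + (v:ℝ)/4) - 2) = v := by
      apply Subtype.ext
      rw [show (4:ℝ)*((1:ℝ)/2 + (v:ℝ)/4) - 2 = v by ring, pr_of_mem v.2]
    rw [h2]

/-- the path family as a continuous family -/
def cmapCM (H : Homotopy (gY.comp θ) (φ.comp gX)) (K : Homotopy (φ.comp ιX) ιY) :
    C(HPB gX ιX, C(I, Y)) :=
  ContinuousMap.curry
    ⟨fun p => craw H K p.1 p.2,
      (craw_cont H K).comp
        (continuous_fst.prodMk (continuous_subtype_val.comp continuous_snd))⟩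

/-- the induced map on homotopy pullbacks -/
def betaMap (H : Homotopy (gY.comp θ) (φ.comp gX)) (K : Homotopy (φ.comp ιX) ιY) :
    C(HPB gX ιX, HPB gY ιY) :=
  ⟨fun q => ⟨(θ q.1.1, (cmapCM H K q, q.1.2.2)),
      ⟨craw_zero H K q, craw_one H K q⟩⟩,
    by
      apply Continuous.subtype_mk
      refine Continuous.prodMk ?_ (Continuous.prodMk ?_ ?_)
      · exact θ.continuous.comp (continuous_fst.comp continuous_subtype_val)
      · exact (cmapCM H K).continuous
      · exact continuous_snd.comp (continuous_snd.comp continuous_subtype_val)⟩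

/-- the cylinder homotopy for the induced map on homotopy pushouts -/
def hcylStep (H : Homotopy (gY.comp θ) (φ.comp gX)) (K : Homotopy (φ.comp ιX) ιY) :
    Homotopy ((HPO.inl (HPB.snd gY ιY) (HPB.fst gY ιY)).comp (HPB.snd gX ιX))
      (((HPO.inr (HPB.snd gY ιY) (HPB.fst gY ιY)).comp θ).comp (HPB.fst gX ιX)) where
  toContinuousMap := ⟨fun tq => HPO.cyl (HPB.snd gY ιY) (HPB.fst gY ιY) (betaMap H K tq.2, tq.1),
    (HPO.cyl _ _).continuous.comp
      (((betaMap H K).continuous.comp continuous_snd).prodMk continuous_fst)⟩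
  map_zero_left q := (Quot.sound (HPORel.left (betaMap H K q))).symm
  map_one_left q := Quot.sound (HPORel.right (betaMap H K q))

/-- the induced map on homotopy pushouts / Ganea steps -/
def thetaStep (H : Homotopy (gY.comp θ) (φ.comp gX)) (K : Homotopy (φ.comp ιX) ιY) :
    C(HPO (HPB.snd gX ιX) (HPB.fst gX ιX), HPO (HPB.snd gY ιY) (HPB.fst gY ιY)) :=
  HPO.desc _ _ (HPO.inl _ _) ((HPO.inr _ _).comp θ) (hcylStep H K)

/-- the homotopy over `φ` of the induced map: piecewise pieces -/
def partA (K : Homotopy (φ.comp ιX) ιY) : C(A, C(I, Y)) :=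
  ContinuousMap.curry ⟨fun p => K (σ p.2, p.1),
    K.continuous.comp ((continuous_symm.comp continuous_snd).prodMk continuous_fst)⟩

def partC (H : Homotopy (gY.comp θ) (φ.comp gX)) : C(GX, C(I, Y)) :=
  ContinuousMap.curry ⟨fun p => H (p.2, p.1),
    H.continuous.comp (continuous_snd.prodMk continuous_fst)⟩

def partB (H : Homotopy (gY.comp θ) (φ.comp gX)) (K : Homotopy (φ.comp ιX) ιY) :
    C(HPB gX ιX × I, C(I, Y)) :=
  ContinuousMap.curry
    ⟨fun p => craw H K p.1.1 (rho p.2 (σ p.1.2)),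
      (craw_cont H K).comp
        ((continuous_fst.comp continuous_fst).prodMk
          (rho_cont.comp
            ((continuous_subtype_val.comp continuous_snd).prodMk
              (continuous_subtype_val.comp
                (continuous_symm.comp (continuous_snd.comp continuous_fst))))))⟩

def hfunStep (H : Homotopy (gY.comp θ) (φ.comp gX)) (K : Homotopy (φ.comp ιX) ιY) :
    C(HPO (HPB.snd gX ιX) (HPB.fst gX ιX), C(I, Y)) :=
  ⟨Quot.lift (Sum.elim ⇑(partA K) (Sum.elim ⇑(partB H K) ⇑(partC H)))
    (by
      rintro x y (⟨z⟩ | ⟨z⟩) <;> refine ContinuousMap.ext fun s => ?_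
      · show K (σ s, z.1.2.2) = craw H K z (rho s (σ (0:I)))
        rw [unitInterval.symm_zero, show ((1:I):ℝ) = 1 from rfl, craw_rho_top H K z s]
      · show craw H K z (rho s (σ (1:I))) = H (s, z.1.1)
        rw [unitInterval.symm_one, show ((0:I):ℝ) = 0 from rfl, craw_rho_bot H K z s]),
    continuous_quot_lift _ (Continuous.sumElim (partA K).continuous
      (Continuous.sumElim (partB H K).continuous (partC H).continuous))⟩

/-- the Ganea-step comparison homotopy -/
def hStep (H : Homotopy (gY.comp θ) (φ.comp gX)) (K : Homotopy (φ.comp ιX) ιY) :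
    Homotopy
      ((HPO.desc (HPB.snd gY ιY) (HPB.fst gY ιY) ιY gY (HPB.pathHomotopy gY ιY)).comp
        (thetaStep H K))
      (φ.comp (HPO.desc (HPB.snd gX ιX) (HPB.fst gX ιX) ιX gX (HPB.pathHomotopy gX ιX))) where
  toContinuousMap := ⟨fun p => hfunStep H K p.2 p.1,
    ContinuousEval.continuous_eval.comp
      (((hfunStep H K).continuous.comp continuous_snd).prodMk continuous_fst)⟩
  map_zero_left := by
    refine Quot.ind ?_
    rintro (a | zt | p) <;>
      simp only [ContinuousMap.coe_mk, ContinuousMap.comp_apply, hfunStep, thetaStep, HPO.desc,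
        HPO.inl, HPO.inr, HPO.cyl, hcylStep, betaMap, cmapCM,
        ContinuousMap.curry_apply, Sum.elim_inl, Sum.elim_inr, HPB.pathHomotopy,
        ContinuousMap.HomotopyWith.coe_toContinuousMap, ContinuousMap.Homotopy.coe_toContinuousMap]
    · show K (σ 0, a) = ιY a
      rw [unitInterval.symm_zero, K.apply_one]
    · show craw H K zt.1 (rho ((0:I):ℝ) (σ zt.2)) = craw H K zt.1 (σ zt.2)
      rw [show ((0:I):ℝ) = 0 from rfl, rho_zero_left]
    · show H (0, p) = gY (θ p)
      rw [H.apply_zero]; rfl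
  map_one_left := by
    refine Quot.ind ?_
    rintro (a | zt | p) <;>
      simp only [ContinuousMap.coe_mk, ContinuousMap.comp_apply, hfunStep, thetaStep, HPO.desc,
        HPO.inl, HPO.inr, HPO.cyl, hcylStep, betaMap, cmapCM,
        ContinuousMap.curry_apply, Sum.elim_inl, Sum.elim_inr, HPB.pathHomotopy,
        ContinuousMap.HomotopyWith.coe_toContinuousMap, ContinuousMap.Homotopy.coe_toContinuousMap]
    · show K (σ 1, a) = φ (ιX a)
      rw [unitInterval.symm_one, K.apply_zero]; rfl
    · show craw H K zt.1 (rho ((1:I):ℝ) (σ zt.2)) = φ (zt.1.1.2.1 (σ zt.2))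
      rw [show ((1:I):ℝ) = 1 from rfl, craw_rho_right H K zt.1 (σ zt.2)]
    · show H (1, p) = φ (gX p)
      rw [H.apply_one]; rfl

lemma thetaStep_comp_inl (H : Homotopy (gY.comp θ) (φ.comp gX))
    (K : Homotopy (φ.comp ιX) ιY) :
    (thetaStep H K).comp (HPO.inl (HPB.snd gX ιX) (HPB.fst gX ιX)) =
      HPO.inl (HPB.snd gY ιY) (HPB.fst gY ιY) := by
  ext a
  rfl

end Aux

lemma ContinuousMap.Homotopic.hcomp {X Y Z : Type u} [TopologicalSpace X] [TopologicalSpace Y]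
    [TopologicalSpace Z] {f₀ f₁ : C(X, Y)} {g₀ g₁ : C(Y, Z)} (hf : f₀.Homotopic f₁)
    (hg : g₀.Homotopic g₁) : (g₀.comp f₀).Homotopic (g₁.comp f₁) :=
  hg.comp hf

open ContinuousMap in
lemma ganea_comparison {A Y X : Type u} [TopologicalSpace A] [TopologicalSpace Y]
    [TopologicalSpace X] (ιY : C(A, Y)) (ιX : C(A, X)) (φ : C(X, Y))
    (K : Homotopy (φ.comp ιX) ιY) :
    ∀ n : ℕ, ∃ θ : C((ganea ιX n).G, (ganea ιY n).G),
      Nonempty (Homotopy ((ganea ιY n).g.comp θ) (φ.comp (ganea ιX n).g)) ∧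
      (θ.comp (ganea ιX n).α).Homotopic (ganea ιY n).α
  | 0 =>
    ⟨ContinuousMap.id A,
      ⟨K.symm.cast (ContinuousMap.comp_id ιY).symm rfl⟩,
      by
        show ((ContinuousMap.id A).comp (ContinuousMap.id A)).Homotopic (ContinuousMap.id A)
        rw [ContinuousMap.id_comp]⟩
  | n + 1 => by
    obtain ⟨θ, ⟨H⟩, _⟩ := ganea_comparison ιY ιX φ K n
    refine ⟨thetaStep H K, ⟨hStep H K⟩, ?_⟩
    rw [show (ganea ιX (n+1)).α =
        HPO.inl (HPB.snd (ganea ιX n).g ιX) (HPB.fst (ganea ιX n).g ιX) from rfl]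
    erw [thetaStep_comp_inl H K]
    exact ContinuousMap.Homotopic.refl _

lemma theNat_mono {P Q : ℕ → Prop} (h : ∀ n, P n → Q n) : theNat Q ≤ theNat P :=
  sInf_le_sInf (Set.image_mono fun n hn => h n hn)

/-- Domination does not increase sectional (resp. relative) category. -/
theorem secat_relcat_mono_of_dominated {A Y X : Type u} [TopologicalSpace A]
    [TopologicalSpace Y] [TopologicalSpace X] (ιY : C(A, Y)) (ιX : C(A, X)) :
    (SimplyDominatedBy ιY ιX → secat ιY ≤ secat ιX) ∧
    (RelDominatedBy ιY ιX → relcat ιY ≤ relcat ιX) := by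
  have main : ∀ (φ : C(X, Y)) (s : C(Y, X)),
      ContinuousMap.Homotopy (φ.comp ιX) ιY → ((φ.comp s).Homotopic (ContinuousMap.id Y)) →
      ∀ n (θ : C((ganea ιX n).G, (ganea ιY n).G)),
      ContinuousMap.Homotopy ((ganea ιY n).g.comp θ) (φ.comp (ganea ιX n).g) →
      ∀ sX : C(X, (ganea ιX n).G), ((ganea ιX n).g.comp sX).Homotopic (ContinuousMap.id X) →
      ((ganea ιY n).g.comp (θ.comp (sX.comp s))).Homotopic (ContinuousMap.id Y) := by
    intro φ s K hφs n θ H sX hsX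
    have e1 : (ganea ιY n).g.comp (θ.comp (sX.comp s)) =
        (((ganea ιY n).g.comp θ).comp sX).comp s := by
      simp [ContinuousMap.comp_assoc]
    have e2 : ((φ.comp (ganea ιX n).g).comp sX).comp s =
        φ.comp (((ganea ιX n).g.comp sX).comp s) := by
      simp [ContinuousMap.comp_assoc]
    have h2 : ((((ganea ιY n).g.comp θ).comp sX).comp s).Homotopic
        (((φ.comp (ganea ιX n).g).comp sX).comp s) :=
      ContinuousMap.Homotopic.hcomp (ContinuousMap.Homotopic.refl s)
        (ContinuousMap.Homotopic.hcomp (ContinuousMap.Homotopic.refl sX) ⟨H⟩)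
    have h3 : (φ.comp (((ganea ιX n).g.comp sX).comp s)).Homotopic
        (φ.comp ((ContinuousMap.id X).comp s)) :=
      ContinuousMap.Homotopic.hcomp
        (ContinuousMap.Homotopic.hcomp (ContinuousMap.Homotopic.refl s) hsX)
        (ContinuousMap.Homotopic.refl φ)
    rw [e1]
    refine h2.trans ?_
    rw [e2]
    refine h3.trans ?_
    rw [ContinuousMap.id_comp]
    exact hφs
  constructor
  · rintro ⟨φ, s, hφι, hφs⟩
    obtain ⟨K⟩ := hφι
    refine theNat_mono fun n h => ?_
    obtain ⟨sX, hsX⟩ := h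
    obtain ⟨θ, ⟨H⟩, -⟩ := ganea_comparison ιY ιX φ K n
    exact ⟨θ.comp (sX.comp s), main φ s K hφs n θ H sX hsX⟩
  · rintro ⟨φ, s, hφι, hφs, hsι⟩
    obtain ⟨K⟩ := hφι
    refine theNat_mono fun n h => ?_
    obtain ⟨sX, hsX, hsα⟩ := h
    obtain ⟨θ, ⟨H⟩, hθα⟩ := ganea_comparison ιY ιX φ K n
    refine ⟨θ.comp (sX.comp s), main φ s K hφs n θ H sX hsX, ?_⟩
    have e3 : (θ.comp (sX.comp s)).comp ιY = θ.comp (sX.comp (s.comp ιY)) := by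
      simp [ContinuousMap.comp_assoc]
    rw [e3]
    have h4 : (θ.comp (sX.comp (s.comp ιY))).Homotopic (θ.comp (sX.comp ιX)) :=
      ContinuousMap.Homotopic.hcomp
        (ContinuousMap.Homotopic.hcomp hsι (ContinuousMap.Homotopic.refl sX))
        (ContinuousMap.Homotopic.refl θ)
    have h5 : (θ.comp (sX.comp ιX)).Homotopic (θ.comp (ganea ιX n).α) :=
      ContinuousMap.Homotopic.hcomp hsα (ContinuousMap.Homotopic.refl θ)
    exact h4.trans (h5.trans hθα)
end

section
/- Suppose ι_X : A → X is a homotopy retract of κ_Y : B → Y, i.e. there is a homotopy commutative diagram with maps t : A → B, ζ : B → A, s : X → Y, f : Y → X such that κ_Y ∘ t ≃ s ∘ ι_X, ι_X ∘ ζ ≃ f ∘ κ_Y, f ∘ s ≃ id_X and ζ ∘ t ≃ id_A. Then relcat(ι_X) ≤ relcat(κ_Y). -/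
open unitInterval

universe u

noncomputable section Aux

open ContinuousMap Set

/-- Clamp a real number into `I`. -/
def clampI : ℝ → I := Set.projIcc (0:ℝ) 1 zero_le_one

lemma clampI_coe (t : I) : clampI (t : ℝ) = t := Set.projIcc_val zero_le_one t

lemma clampI_zero : clampI 0 = 0 := by
  simpa using clampI_coe 0

lemma clampI_one : clampI 1 = 1 := by
  simpa using clampI_coe 1

lemma continuous_clampI : Continuous clampI := continuous_projIcc

section Functorial

variable {A A' G G' X X' : Type u} [TopologicalSpace A] [TopologicalSpace A']
  [TopologicalSpace G] [TopologicalSpace G'] [TopologicalSpace X] [TopologicalSpace X']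
  (g : C(G, X)) (a : C(A, X)) (g' : C(G', X')) (a' : C(A', X'))
  (φ : C(G, G')) (u : C(A, A')) (v : C(X, X'))
  (K : ContinuousMap.Homotopy (g'.comp φ) (v.comp g))
  (H : ContinuousMap.Homotopy (a'.comp u) (v.comp a))

/-- The two-parameter deformation of the concatenated path `K ⬝ v∘γ ⬝ H⁻¹`. -/
def theta : C(HPB g a × (I × I), X') := by
  refine ⟨fun x =>
    if (3:ℝ) * x.2.2 ≤ 1 - x.2.1 then K (clampI ((x.2.1:ℝ) + 3 * x.2.2), x.1.1.1)
    else if (3:ℝ) * x.2.2 ≤ 2 + x.2.1 then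
      v (x.1.1.2.1 (clampI ((3 * (x.2.2:ℝ) - (1 - x.2.1)) / (1 + 2 * x.2.1))))
    else H (clampI (3 - 3 * (x.2.2:ℝ) + x.2.1), x.1.1.2.2), ?_⟩
  have ct : Continuous fun x : HPB g a × I × I => (x.2.1 : ℝ) :=
    continuous_subtype_val.comp (continuous_fst.comp continuous_snd)
  have cs : Continuous fun x : HPB g a × I × I => (x.2.2 : ℝ) :=
    continuous_subtype_val.comp (continuous_snd.comp continuous_snd)
  have cγ : Continuous fun x : HPB g a × I × I => x.1.1.2.1 :=
    (continuous_fst.comp (continuous_snd.comp continuous_subtype_val)).comp continuous_fst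
  have cfst : Continuous fun x : HPB g a × I × I => x.1.1.1 :=
    (continuous_fst.comp continuous_subtype_val).comp continuous_fst
  have csnd : Continuous fun x : HPB g a × I × I => x.1.1.2.2 :=
    (continuous_snd.comp (continuous_snd.comp continuous_subtype_val)).comp continuous_fst
  have c1 : Continuous fun x : HPB g a × I × I =>
      K (clampI ((x.2.1:ℝ) + 3 * x.2.2), x.1.1.1) :=
    K.continuous.comp ((continuous_clampI.comp (ct.add (continuous_const.mul cs))).prodMk cfst)
  have c2 : Continuous fun x : HPB g a × I × I =>
      v (x.1.1.2.1 (clampI ((3 * (x.2.2:ℝ) - (1 - x.2.1)) / (1 + 2 * x.2.1)))) := by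
    refine v.continuous.comp (ContinuousEval.continuous_eval.comp (cγ.prodMk ?_))
    refine continuous_clampI.comp (Continuous.div ?_ ?_ ?_)
    · exact ((continuous_const.mul cs).sub (continuous_const.sub ct))
    · exact continuous_const.add (continuous_const.mul ct)
    · intro x
      have := x.2.1.2.1
      intro hc; linarith
  have c3 : Continuous fun x : HPB g a × I × I =>
      H (clampI (3 - 3 * (x.2.2:ℝ) + x.2.1), x.1.1.2.2) :=
    H.continuous.comp ((continuous_clampI.comp
      ((continuous_const.sub (continuous_const.mul cs)).add ct)).prodMk csnd)
  refine Continuous.if_le c1 (Continuous.if_le c2 c3 (continuous_const.mul cs)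
    (continuous_const.add ct) ?_) (continuous_const.mul cs) (continuous_const.sub ct) ?_
  · -- boundary 3s = 2 + t
    rintro x hx
    have ht0 : (0:ℝ) ≤ x.2.1 := x.2.1.2.1
    have hnum : 3 * (x.2.2:ℝ) - (1 - x.2.1) = 1 + 2 * x.2.1 := by
      linarith
    have hden : (1:ℝ) + 2 * x.2.1 ≠ 0 := by positivity
    have h1 : (3:ℝ) - 3 * x.2.2 + x.2.1 = 1 := by linarith
    rw [hnum, div_self hden, h1, clampI_one, x.1.2.2, H.apply_one]
    rfl
  · -- boundary 3s = 1 - t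
    rintro x hx
    have ht0 : (0:ℝ) ≤ x.2.1 := x.2.1.2.1
    have hle : (3:ℝ) * x.2.2 ≤ 2 + x.2.1 := by linarith
    rw [if_pos hle]
    have h1 : (x.2.1:ℝ) + 3 * x.2.2 = 1 := by linarith
    have h2 : 3 * (x.2.2:ℝ) - (1 - x.2.1) = 0 := by linarith
    rw [h1, h2, zero_div, clampI_one, clampI_zero, x.1.2.1, K.apply_one]
    rfl

lemma theta_s_zero (p : HPB g a) (t : I) :
    theta g a g' a' φ u v K H (p, (t, 0)) = K (t, p.1.1) := by
  have h0 : ((0:I):ℝ) = 0 := rfl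
  have ht1 : (t:ℝ) ≤ 1 := t.2.2
  simp only [theta, ContinuousMap.coe_mk]
  rw [if_pos (by rw [h0]; linarith)]
  have : (t:ℝ) + 3 * ((0:I):ℝ) = (t:ℝ) := by rw [h0]; ring
  rw [this, clampI_coe]

lemma theta_s_one (p : HPB g a) (t : I) :
    theta g a g' a' φ u v K H (p, (t, 1)) = H (t, p.1.2.2) := by
  have h1 : ((1:I):ℝ) = 1 := rfl
  have ht0 : (0:ℝ) ≤ t := t.2.1
  have ht1 : (t:ℝ) ≤ 1 := t.2.2
  simp only [theta, ContinuousMap.coe_mk]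
  rw [if_neg (by rw [h1]; push_neg; linarith)]
  by_cases ht : (t:ℝ) = 1
  · have htI : t = 1 := Subtype.ext ht
    rw [if_pos (by rw [h1, ht]; linarith)]
    have : (3 * ((1:I):ℝ) - (1 - (t:ℝ))) / (1 + 2 * (t:ℝ)) = 1 := by
      rw [h1, ht]; norm_num
    rw [this, clampI_one, p.2.2, htI, H.apply_one]
    rfl
  · have ht' : (t:ℝ) < 1 := lt_of_le_of_ne ht1 ht
    rw [if_neg (by rw [h1]; push_neg; linarith)]
    have : (3:ℝ) - 3 * ((1:I):ℝ) + (t:ℝ) = (t:ℝ) := by rw [h1]; ring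
    rw [this, clampI_coe]

lemma theta_t_one (p : HPB g a) (s : I) :
    theta g a g' a' φ u v K H (p, (1, s)) = v (p.1.2.1 s) := by
  have h1 : ((1:I):ℝ) = 1 := rfl
  have hs0 : (0:ℝ) ≤ s := s.2.1
  have hs1 : (s:ℝ) ≤ 1 := s.2.2
  simp only [theta, ContinuousMap.coe_mk]
  by_cases hs : (s:ℝ) = 0
  · have hsI : s = 0 := Subtype.ext hs
    rw [if_pos (by rw [h1, hs]; linarith)]
    have : ((1:I):ℝ) + 3 * (s:ℝ) = 1 := by rw [h1, hs]; ring
    rw [this, clampI_one, K.apply_one, hsI, p.2.1]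
    rfl
  · have hs' : (0:ℝ) < s := lt_of_le_of_ne hs0 (Ne.symm hs)
    rw [if_neg (by rw [h1]; push_neg; linarith)]
    rw [if_pos (by rw [h1]; linarith)]
    have : (3 * (s:ℝ) - (1 - ((1:I):ℝ))) / (1 + 2 * ((1:I):ℝ)) = (s:ℝ) := by
      rw [h1]; ring
    rw [this, clampI_coe]

/-- The comparison map between homotopy pullbacks. -/
def pbMap : C(HPB g a, HPB g' a') := by
  refine ⟨fun p => ⟨(φ p.1.1,
    ((⟨fun s => theta g a g' a' φ u v K H (p, ((0:I), s)),
        (theta g a g' a' φ u v K H).continuous.comp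
          (continuous_const.prodMk (continuous_const.prodMk continuous_id))⟩ : C(I, X')),
      u p.1.2.2)), ?_, ?_⟩, ?_⟩
  · show theta g a g' a' φ u v K H (p, (0, 0)) = _
    rw [theta_s_zero, K.apply_zero]; rfl
  · show theta g a g' a' φ u v K H (p, (0, 1)) = _
    rw [theta_s_one, H.apply_zero]; rfl
  · refine Continuous.subtype_mk ?_ _
    refine (φ.continuous.comp (continuous_fst.comp continuous_subtype_val)).prodMk
      (Continuous.prodMk ?_
        (u.continuous.comp ((continuous_snd.comp (continuous_snd.comp continuous_subtype_val)))))
    refine ContinuousMap.continuous_of_continuous_uncurry _ ?_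
    exact (theta g a g' a' φ u v K H).continuous.comp
      (continuous_fst.prodMk (continuous_const.prodMk continuous_snd))

/-- The comparison map between Ganea steps. -/
def hpoMap : C(HPO (HPB.snd g a) (HPB.fst g a), HPO (HPB.snd g' a') (HPB.fst g' a')) := by
  refine ⟨Quot.lift (Sum.elim (fun b => Quot.mk _ (Sum.inl (u b)))
    (Sum.elim (fun zt => Quot.mk _ (Sum.inr (Sum.inl (pbMap g a g' a' φ u v K H zt.1, zt.2))))
      (fun q => Quot.mk _ (Sum.inr (Sum.inr (φ q)))))) ?_, ?_⟩
  · rintro x y (⟨z⟩ | ⟨z⟩)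
    · exact Quot.sound (HPORel.left (pbMap g a g' a' φ u v K H z))
    · exact Quot.sound (HPORel.right (pbMap g a g' a' φ u v K H z))
  · refine continuous_quot_lift _ (Continuous.sumElim ?_ (Continuous.sumElim ?_ ?_))
    · exact continuous_quot_mk.comp (continuous_inl.comp u.continuous)
    · exact continuous_quot_mk.comp ((continuous_inr.comp continuous_inl).comp
        (((pbMap g a g' a' φ u v K H).continuous.comp continuous_fst).prodMk continuous_snd))
    · exact continuous_quot_mk.comp ((continuous_inr.comp continuous_inr).comp φ.continuous)

/-- Family of vertical paths over the homotopy pushout. -/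
def hpoHtpyMap : C(HPO (HPB.snd g a) (HPB.fst g a), C(I, X')) := by
  refine ⟨Quot.lift (Sum.elim
      (fun b => (⟨fun t => H (t, b), H.continuous.comp
        (continuous_id.prodMk continuous_const)⟩ : C(I, X')))
      (Sum.elim
        (fun zt => (⟨fun t => theta g a g' a' φ u v K H (zt.1, (t, σ zt.2)),
          (theta g a g' a' φ u v K H).continuous.comp
            (continuous_const.prodMk (continuous_id.prodMk continuous_const))⟩ : C(I, X')))
        (fun q => (⟨fun t => K (t, q), K.continuous.comp
          (continuous_id.prodMk continuous_const)⟩ : C(I, X'))))) ?_, ?_⟩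
  · rintro x y (⟨z⟩ | ⟨z⟩)
    · ext t
      show H (t, (HPB.snd g a) z) = theta g a g' a' φ u v K H (z, (t, σ 0))
      rw [unitInterval.symm_zero, theta_s_one]
      rfl
    · ext t
      show theta g a g' a' φ u v K H (z, (t, σ 1)) = K (t, (HPB.fst g a) z)
      rw [unitInterval.symm_one, theta_s_zero]
      rfl
  · refine continuous_quot_lift _ (Continuous.sumElim ?_ (Continuous.sumElim ?_ ?_))
    · refine ContinuousMap.continuous_of_continuous_uncurry _ ?_
      exact H.continuous.comp (continuous_snd.prodMk continuous_fst)
    · refine ContinuousMap.continuous_of_continuous_uncurry _ ?_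
      exact (theta g a g' a' φ u v K H).continuous.comp
        ((continuous_fst.comp continuous_fst).prodMk (continuous_snd.prodMk
          (continuous_symm.comp (continuous_snd.comp continuous_fst))))
    · refine ContinuousMap.continuous_of_continuous_uncurry _ ?_
      exact K.continuous.comp (continuous_snd.prodMk continuous_fst)

/-- The homotopy making `hpoMap` commute with the Ganea fibrations. -/
def stepHomotopy : ContinuousMap.Homotopy
    ((HPO.desc (HPB.snd g' a') (HPB.fst g' a') a' g' (HPB.pathHomotopy g' a')).comp
      (hpoMap g a g' a' φ u v K H))
    (v.comp (HPO.desc (HPB.snd g a) (HPB.fst g a) a g (HPB.pathHomotopy g a))) where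
  toFun := fun q => hpoHtpyMap g a g' a' φ u v K H q.2 q.1
  continuous_toFun := ContinuousEval.continuous_eval.comp
      (((hpoHtpyMap g a g' a' φ u v K H).continuous.comp continuous_snd).prodMk continuous_fst)
  map_zero_left x := by
    induction x using Quot.ind with
    | _ y =>
      rcases y with b | (⟨z, τ⟩ | q)
      · show hpoHtpyMap g a g' a' φ u v K H (Quot.mk _ (Sum.inl b)) 0 = _
        rw [show hpoHtpyMap g a g' a' φ u v K H (Quot.mk _ (Sum.inl b)) =
          (⟨fun t => H (t, b), H.continuous.comp (continuous_id.prodMk continuous_const)⟩ :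
            C(I, X')) from rfl]
        simp only [ContinuousMap.coe_mk, ContinuousMap.comp_apply]
        rw [H.apply_zero]
        rfl
      · show hpoHtpyMap g a g' a' φ u v K H (Quot.mk _ (Sum.inr (Sum.inl (z, τ)))) 0 = _
        rw [show hpoHtpyMap g a g' a' φ u v K H (Quot.mk _ (Sum.inr (Sum.inl (z, τ)))) =
          (⟨fun t => theta g a g' a' φ u v K H (z, (t, σ τ)),
            (theta g a g' a' φ u v K H).continuous.comp
              (continuous_const.prodMk (continuous_id.prodMk continuous_const))⟩ :
            C(I, X')) from rfl]
        simp only [ContinuousMap.coe_mk, ContinuousMap.comp_apply]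
        rfl
      · show hpoHtpyMap g a g' a' φ u v K H (Quot.mk _ (Sum.inr (Sum.inr q))) 0 = _
        rw [show hpoHtpyMap g a g' a' φ u v K H (Quot.mk _ (Sum.inr (Sum.inr q))) =
          (⟨fun t => K (t, q), K.continuous.comp (continuous_id.prodMk continuous_const)⟩ :
            C(I, X')) from rfl]
        simp only [ContinuousMap.coe_mk, ContinuousMap.comp_apply]
        rw [K.apply_zero]
        rfl
  map_one_left x := by
    induction x using Quot.ind with
    | _ y =>
      rcases y with b | (⟨z, τ⟩ | q)
      · show hpoHtpyMap g a g' a' φ u v K H (Quot.mk _ (Sum.inl b)) 1 = _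
        rw [show hpoHtpyMap g a g' a' φ u v K H (Quot.mk _ (Sum.inl b)) =
          (⟨fun t => H (t, b), H.continuous.comp (continuous_id.prodMk continuous_const)⟩ :
            C(I, X')) from rfl]
        simp only [ContinuousMap.coe_mk, ContinuousMap.comp_apply]
        rw [H.apply_one]
        rfl
      · show hpoHtpyMap g a g' a' φ u v K H (Quot.mk _ (Sum.inr (Sum.inl (z, τ)))) 1 = _
        rw [show hpoHtpyMap g a g' a' φ u v K H (Quot.mk _ (Sum.inr (Sum.inl (z, τ)))) =
          (⟨fun t => theta g a g' a' φ u v K H (z, (t, σ τ)),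
            (theta g a g' a' φ u v K H).continuous.comp
              (continuous_const.prodMk (continuous_id.prodMk continuous_const))⟩ :
            C(I, X')) from rfl]
        simp only [ContinuousMap.coe_mk, ContinuousMap.comp_apply]
        rw [theta_t_one]
        rfl
      · show hpoHtpyMap g a g' a' φ u v K H (Quot.mk _ (Sum.inr (Sum.inr q))) 1 = _
        rw [show hpoHtpyMap g a g' a' φ u v K H (Quot.mk _ (Sum.inr (Sum.inr q))) =
          (⟨fun t => K (t, q), K.continuous.comp (continuous_id.prodMk continuous_const)⟩ :
            C(I, X')) from rfl]
        simp only [ContinuousMap.coe_mk, ContinuousMap.comp_apply]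
        rw [K.apply_one]
        rfl

end Functorial

/-- Functoriality of the Ganea construction along homotopy commutative squares. -/
lemma ganea_functorial {A B X Y : Type u} [TopologicalSpace A] [TopologicalSpace B]
    [TopologicalSpace X] [TopologicalSpace Y] (ι : C(A, X)) (κ : C(B, Y))
    (u : C(B, A)) (v : C(Y, X)) (H : (ι.comp u).Homotopic (v.comp κ)) (n : ℕ) :
    ∃ φ : C((ganea κ n).G, (ganea ι n).G),
      ((ganea ι n).g.comp φ).Homotopic (v.comp (ganea κ n).g) ∧
      (φ.comp (ganea κ n).α).Homotopic ((ganea ι n).α.comp u) := by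
  induction n with
  | zero =>
    refine ⟨u, H, ?_⟩
    show (u.comp (ContinuousMap.id B)).Homotopic ((ContinuousMap.id A).comp u)
    rw [ContinuousMap.comp_id, ContinuousMap.id_comp]
  | succ n ih =>
    obtain ⟨φ, hg, hα⟩ := ih
    obtain ⟨K⟩ := hg
    obtain ⟨H'⟩ := H
    refine ⟨hpoMap (ganea κ n).g κ (ganea ι n).g ι φ u v K H',
      ⟨stepHomotopy (ganea κ n).g κ (ganea ι n).g ι φ u v K H'⟩, ?_⟩
    have : (hpoMap (ganea κ n).g κ (ganea ι n).g ι φ u v K H').comp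
        (HPO.inl (HPB.snd (ganea κ n).g κ) (HPB.fst (ganea κ n).g κ)) =
        (HPO.inl (HPB.snd (ganea ι n).g ι) (HPB.fst (ganea ι n).g ι)).comp u :=
      ContinuousMap.ext fun b => rfl
    show (_ : C(B, _)).Homotopic _
    rw [show ((ganea κ (n+1)).α : C(B, (ganea κ (n+1)).G)) =
      HPO.inl (HPB.snd (ganea κ n).g κ) (HPB.fst (ganea κ n).g κ) from rfl]
    exact this ▸ ContinuousMap.Homotopic.refl _

end Aux


/-- Relative category is monotone under homotopy retracts of maps. -/
theorem relcat_le_of_homotopy_retract {A B X Y : Type u} [TopologicalSpace A]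
    [TopologicalSpace B] [TopologicalSpace X] [TopologicalSpace Y]
    (ιX : C(A, X)) (κY : C(B, Y)) (t : C(A, B)) (ζ : C(B, A)) (s : C(X, Y)) (f : C(Y, X))
    (h1 : (κY.comp t).Homotopic (s.comp ιX)) (h2 : (ιX.comp ζ).Homotopic (f.comp κY))
    (h3 : (f.comp s).Homotopic (ContinuousMap.id X))
    (h4 : (ζ.comp t).Homotopic (ContinuousMap.id A)) :
    relcat ιX ≤ relcat κY := by
  have key : ∀ n : ℕ, relcatLe κY n → relcatLe ιX n := by
    intro n hn
    obtain ⟨σ₀, hσ1, hσ2⟩ := hn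
    obtain ⟨φ, hg, hα⟩ := ganea_functorial ιX κY ζ f h2 n
    refine ⟨φ.comp (σ₀.comp s), ?_, ?_⟩
    · have e1 : (ganea ιX n).g.comp (φ.comp (σ₀.comp s)) =
          (((ganea ιX n).g.comp φ).comp σ₀).comp s := ContinuousMap.ext fun _ => rfl
      rw [e1]
      have st1 : ((((ganea ιX n).g.comp φ).comp σ₀).comp s).Homotopic
          (((f.comp (ganea κY n).g).comp σ₀).comp s) :=
        ContinuousMap.Homotopic.comp
          (ContinuousMap.Homotopic.comp hg (ContinuousMap.Homotopic.refl σ₀)) (ContinuousMap.Homotopic.refl s)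
      have e2 : ((f.comp (ganea κY n).g).comp σ₀).comp s =
          (f.comp ((ganea κY n).g.comp σ₀)).comp s := ContinuousMap.ext fun _ => rfl
      have st2 : ((f.comp ((ganea κY n).g.comp σ₀)).comp s).Homotopic
          ((f.comp (ContinuousMap.id Y)).comp s) :=
        ContinuousMap.Homotopic.comp
          (ContinuousMap.Homotopic.comp (ContinuousMap.Homotopic.refl f) hσ1) (ContinuousMap.Homotopic.refl s)
      have e3 : (f.comp (ContinuousMap.id Y)).comp s = f.comp s :=
        ContinuousMap.ext fun _ => rfl
      exact st1.trans ((e2 ▸ st2).trans (e3 ▸ h3))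
    · have e1 : (φ.comp (σ₀.comp s)).comp ιX = (φ.comp σ₀).comp (s.comp ιX) :=
        ContinuousMap.ext fun _ => rfl
      rw [e1]
      have st1 : ((φ.comp σ₀).comp (s.comp ιX)).Homotopic
          ((φ.comp σ₀).comp (κY.comp t)) :=
        ContinuousMap.Homotopic.comp
          (ContinuousMap.Homotopic.refl (φ.comp σ₀)) h1.symm
      have e2 : (φ.comp σ₀).comp (κY.comp t) = (φ.comp (σ₀.comp κY)).comp t :=
        ContinuousMap.ext fun _ => rfl
      have st2 : ((φ.comp (σ₀.comp κY)).comp t).Homotopic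
          ((φ.comp (ganea κY n).α).comp t) :=
        ContinuousMap.Homotopic.comp
          (ContinuousMap.Homotopic.comp (ContinuousMap.Homotopic.refl φ) hσ2) (ContinuousMap.Homotopic.refl t)
      have st3 : ((φ.comp (ganea κY n).α).comp t).Homotopic
          (((ganea ιX n).α.comp ζ).comp t) :=
        ContinuousMap.Homotopic.comp hα (ContinuousMap.Homotopic.refl t)
      have e4 : ((ganea ιX n).α.comp ζ).comp t = (ganea ιX n).α.comp (ζ.comp t) :=
        ContinuousMap.ext fun _ => rfl
      have st4 : ((ganea ιX n).α.comp (ζ.comp t)).Homotopic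
          ((ganea ιX n).α.comp (ContinuousMap.id A)) :=
        ContinuousMap.Homotopic.comp (ContinuousMap.Homotopic.refl _) h4
      have e5 : (ganea ιX n).α.comp (ContinuousMap.id A) = (ganea ιX n).α :=
        ContinuousMap.comp_id _
      exact st1.trans ((e2 ▸ st2).trans (st3.trans ((e4 ▸ st4).trans (e5 ▸
        ContinuousMap.Homotopic.refl _))))
  unfold relcat theNat
  apply sInf_le_sInf
  rintro x ⟨n, hn, rfl⟩
  exact ⟨n, key n hn, rfl⟩
end

section
/- Given a homotopy pushout square Z → A, Z → X, with resulting cofibre-type map χ : X → C and ι_C : A → C satisfying χ ∘ ι_X ≃ ι_C for a map ι_X : A → X, one has relcat(ι_C) ≤ relcat(ι_X) + 1. -/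
open unitInterval

universe u

section Fillers

namespace ContinuousMap.Homotopy

variable {W Y : Type u} [TopologicalSpace W] [TopologicalSpace Y] {a b c d : C(W, Y)}

private lemma ev_cont (F : a.Homotopy b) {α : Type*} [TopologicalSpace α]
    {e : α → ℝ} {w : α → W} (he : Continuous e) (hw : Continuous w) :
    Continuous fun x => F.extend (e x) (w x) := by
  have h : ∀ x, F.extend (e x) (w x) = F (Set.projIcc 0 1 zero_le_one (e x), w x) := fun _ => rfl
  simp only [h]
  exact F.continuous.comp ((continuous_projIcc.comp he).prodMk hw)

/-- Square contracting `P.trans R` onto `P`, with sides `a` and `R.symm`. -/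
noncomputable def filler2 (P : a.Homotopy b) (R : b.Homotopy c) : C((W × I) × I, Y) where
  toFun x :=
    if (2 * (x.1.2 : ℝ)) ≤ 1 + (x.2 : ℝ) then
      P.extend ((2 * (x.1.2 : ℝ)) / (1 + (x.2 : ℝ))) x.1.1
    else R.extend (2 * (x.1.2 : ℝ) - 1 - (x.2 : ℝ)) x.1.1
  continuous_toFun := by
    have ht : Continuous fun x : (W × I) × I => (x.1.2 : ℝ) :=
      continuous_subtype_val.comp (continuous_snd.comp continuous_fst)
    have hu : Continuous fun x : (W × I) × I => (x.2 : ℝ) :=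
      continuous_subtype_val.comp continuous_snd
    have hw : Continuous fun x : (W × I) × I => x.1.1 := continuous_fst.comp continuous_fst
    refine Continuous.if_le ?_ ?_ (by fun_prop) (by fun_prop) ?_
    · refine P.ev_cont (Continuous.div (by fun_prop) (by fun_prop) ?_) hw
      exact fun x => ne_of_gt (by linarith [x.2.2.1])
    · exact R.ev_cont (by fun_prop) hw
    · rintro ⟨⟨w, t⟩, u⟩ h
      simp only at h ⊢
      rw [h, div_self (by linarith [u.2.1]), P.extend_apply_of_one_le le_rfl,
        show (1 : ℝ) + u - 1 - u = 0 by ring, R.extend_apply_of_le_zero le_rfl]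

lemma filler2_zero (P : a.Homotopy b) (R : b.Homotopy c) (w : W) (t : I) :
    filler2 P R ((w, t), 0) = (P.trans R) (t, w) := by
  show (if (2 * (t : ℝ)) ≤ 1 + ((0:I) : ℝ) then _ else _) = (P.trans R) (t, w)
  rw [show (P.trans R) (t, w) =
      if (t : ℝ) ≤ 1/2 then P.extend (2 * t) w else R.extend (2 * t - 1) w from rfl]
  have h0 : ((0:I) : ℝ) = 0 := rfl
  rcases le_or_gt (t : ℝ) (1/2) with h | h
  · rw [if_pos (by rw [h0]; linarith), if_pos h, h0]
    norm_num
  · rw [if_neg (by rw [h0]; intro hcon; linarith), if_neg (not_le.2 h), h0]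
    norm_num

lemma filler2_one (P : a.Homotopy b) (R : b.Homotopy c) (w : W) (t : I) :
    filler2 P R ((w, t), 1) = P (t, w) := by
  show (if _ then _ else _) = _
  have h1 : ((1:I) : ℝ) = 1 := rfl
  rw [if_pos (by rw [h1]; linarith [t.2.2]), h1,
    show 2 * (t:ℝ) / (1 + 1) = (t:ℝ) by ring, P.extend_apply_of_mem_I t.2]

lemma filler2_left (P : a.Homotopy b) (R : b.Homotopy c) (w : W) (u : I) :
    filler2 P R ((w, 0), u) = a w := by
  show (if _ then _ else _) = _
  have h0 : (((0:I), u).1 : ℝ) = 0 := rfl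
  rw [if_pos (by rw [show (((w,(0:I)),u).1.2 : ℝ) = 0 from rfl]; linarith [u.2.1]),
    show 2 * (((w,(0:I)),u).1.2:ℝ) / (1 + (u:ℝ)) = 0 by
      rw [show (((w,(0:I)),u).1.2:ℝ) = 0 from rfl]; ring,
    P.extend_apply_of_le_zero le_rfl]

lemma filler2_right (P : a.Homotopy b) (R : b.Homotopy c) (w : W) (u : I) :
    filler2 P R ((w, 1), u) = R (σ u, w) := by
  show (if _ then _ else _) = _
  have h1 : (((w,(1:I)),u).1.2 : ℝ) = 1 := rfl
  rcases le_or_gt (2 * (((w,(1:I)),u).1.2 : ℝ)) (1 + (u:ℝ)) with h | h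
  · have hu : (u : ℝ) = 1 := le_antisymm u.2.2 (by rw [h1] at h; linarith)
    rw [if_pos h, h1, hu, show 2 * (1:ℝ) / (1 + 1) = (1:ℝ) by norm_num,
      P.extend_apply_of_one_le le_rfl,
      show σ u = 0 from Subtype.ext (by simp [hu]), R.apply_zero]
  · rw [if_neg (not_le.2 h), h1,
      show 2 * (1:ℝ) - 1 - (u:ℝ) = ((σ u : I) : ℝ) by rw [coe_symm_eq]; ring,
      R.extend_apply_coe]

/-- Square contracting `P.trans (Q.trans R)` onto `Q`, with sides `P` and `R.symm`. -/
noncomputable def filler3 (P : a.Homotopy b) (Q : b.Homotopy c) (R : c.Homotopy d) : C((W × I) × I, Y) where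
  toFun x :=
    if (2 * (x.1.2 : ℝ)) ≤ 1 - (x.2 : ℝ) then
      P.extend (2 * (x.1.2 : ℝ) + (x.2 : ℝ)) x.1.1
    else if (4 * (x.1.2 : ℝ)) ≤ 3 + (x.2 : ℝ) then
      Q.extend ((4 * (x.1.2 : ℝ) - 2 + 2 * (x.2 : ℝ)) / (1 + 3 * (x.2 : ℝ))) x.1.1
    else R.extend (4 * (x.1.2 : ℝ) - 3 - (x.2 : ℝ)) x.1.1
  continuous_toFun := by
    have ht : Continuous fun x : (W × I) × I => (x.1.2 : ℝ) :=
      continuous_subtype_val.comp (continuous_snd.comp continuous_fst)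
    have hu : Continuous fun x : (W × I) × I => (x.2 : ℝ) :=
      continuous_subtype_val.comp continuous_snd
    have hw : Continuous fun x : (W × I) × I => x.1.1 := continuous_fst.comp continuous_fst
    have hq : Continuous fun x : (W × I) × I =>
        Q.extend ((4 * (x.1.2 : ℝ) - 2 + 2 * (x.2 : ℝ)) / (1 + 3 * (x.2 : ℝ))) x.1.1 := by
      refine Q.ev_cont (Continuous.div (by fun_prop) (by fun_prop) ?_) hw
      exact fun x => ne_of_gt (by linarith [x.2.2.1])
    refine Continuous.if_le (P.ev_cont (by fun_prop) hw) ?_ (by fun_prop) (by fun_prop) ?_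
    · refine Continuous.if_le hq (R.ev_cont (by fun_prop) hw) (by fun_prop) (by fun_prop) ?_
      rintro ⟨⟨w, t⟩, u⟩ h
      simp only at h ⊢
      rw [show 4 * (t:ℝ) - 3 - u = 0 by linarith, R.extend_apply_of_le_zero le_rfl,
        show (4 * (t:ℝ) - 2 + 2 * u) / (1 + 3 * u) = 1 by
          rw [show 4 * (t:ℝ) - 2 + 2*u = 1 + 3*u by linarith];
            exact div_self (by linarith [u.2.1]),
        Q.extend_apply_of_one_le le_rfl]
    · rintro ⟨⟨w, t⟩, u⟩ h
      simp only at h ⊢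
      rw [show 2 * (t:ℝ) + u = 1 by linarith, P.extend_apply_of_one_le le_rfl,
        if_pos (by linarith [u.2.1] : 4 * (t:ℝ) ≤ 3 + (u:ℝ)),
        show (4 * (t:ℝ) - 2 + 2 * u) / (1 + 3 * u) = 0 by
          rw [show 4 * (t:ℝ) - 2 + 2*u = 0 by linarith, zero_div],
        Q.extend_apply_of_le_zero le_rfl]

lemma filler3_zero (P : a.Homotopy b) (Q : b.Homotopy c) (R : c.Homotopy d) (w : W) (t : I) :
    filler3 P Q R ((w, t), 0) = (P.trans (Q.trans R)) (t, w) := by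
  show (if _ then _ else _) = _
  rw [ContinuousMap.Homotopy.trans_apply]
  have h0 : ((0:I) : ℝ) = 0 := rfl
  rcases le_or_gt (t : ℝ) (1/2) with h | h
  · rw [dif_pos h, if_pos (by rw [h0]; linarith)]
    rw [h0, show 2 * (t:ℝ) + 0 = 2 * (t:ℝ) by ring,
      P.extend_apply_of_mem_I ⟨by linarith [t.2.1], by linarith⟩]
  · rw [dif_neg (not_le.2 h), if_neg (by rw [h0]; intro hcon; linarith),
      ContinuousMap.Homotopy.trans_apply]
    rcases le_or_gt (2 * (t:ℝ) - 1) (1/2) with h2 | h2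
    · rw [dif_pos (by exact_mod_cast h2), if_pos (by rw [h0]; linarith)]
      rw [h0, show (4 * (t:ℝ) - 2 + 2 * 0) / (1 + 3 * 0) = 2 * (2 * (t:ℝ) - 1) by ring,
        Q.extend_apply_of_mem_I ⟨by linarith, by linarith⟩]
    · rw [dif_neg (by exact_mod_cast not_le.2 h2), if_neg (by rw [h0]; intro hcon; linarith)]
      rw [h0, show 4 * (t:ℝ) - 3 - 0 = 2 * (2 * (t:ℝ) - 1) - 1 by ring,
        R.extend_apply_of_mem_I ⟨by linarith, by linarith [t.2.2]⟩]

lemma filler3_one (P : a.Homotopy b) (Q : b.Homotopy c) (R : c.Homotopy d) (w : W) (t : I) :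
    filler3 P Q R ((w, t), 1) = Q (t, w) := by
  show (if _ then _ else _) = _
  have h1 : ((1:I) : ℝ) = 1 := rfl
  rcases le_or_gt (2 * (t : ℝ)) (1 - ((1:I):ℝ)) with h | h
  · have ht : (t : ℝ) = 0 := le_antisymm (by rw [h1] at h; linarith) t.2.1
    rw [if_pos h, h1, show 2 * (t:ℝ) + 1 = 1 by rw [ht]; ring,
      P.extend_apply_of_one_le le_rfl,
      show t = 0 from Subtype.ext ht, Q.apply_zero]
  · rw [if_neg (not_le.2 h), if_pos (by rw [h1]; linarith [t.2.2]), h1,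
      show (4 * (t:ℝ) - 2 + 2 * 1) / (1 + 3 * 1) = (t:ℝ) by ring,
      Q.extend_apply_of_mem_I t.2]

lemma filler3_left (P : a.Homotopy b) (Q : b.Homotopy c) (R : c.Homotopy d) (w : W) (u : I) :
    filler3 P Q R ((w, 0), u) = P (u, w) := by
  show (if _ then _ else _) = _
  have h0 : (((w,(0:I)),u).1.2 : ℝ) = 0 := rfl
  rw [if_pos (by rw [h0]; linarith [u.2.2]), h0,
    show 2 * (0:ℝ) + (u:ℝ) = (u:ℝ) by ring, P.extend_apply_of_mem_I u.2]

lemma filler3_right (P : a.Homotopy b) (Q : b.Homotopy c) (R : c.Homotopy d) (w : W) (u : I) :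
    filler3 P Q R ((w, 1), u) = R (σ u, w) := by
  show (if _ then _ else _) = _
  have h1 : (((w,(1:I)),u).1.2 : ℝ) = 1 := rfl
  rw [if_neg (by rw [h1]; intro hcon; linarith [u.2.1])]
  rcases le_or_gt (4 * (((w,(1:I)),u).1.2 : ℝ)) (3 + (u:ℝ)) with h | h
  · have hu : (u : ℝ) = 1 := le_antisymm u.2.2 (by rw [h1] at h; linarith)
    rw [if_pos h, h1, show (4 * (1:ℝ) - 2 + 2 * (u:ℝ)) / (1 + 3 * (u:ℝ)) = 1 by
        rw [hu]; norm_num, Q.extend_apply_of_one_le le_rfl,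
      show σ u = 0 from Subtype.ext (by simp [hu]), R.apply_zero]
  · rw [if_neg (not_le.2 h), h1,
      show 4 * (1:ℝ) - 3 - (u:ℝ) = ((σ u : I) : ℝ) by rw [coe_symm_eq]; ring,
      R.extend_apply_coe]

end ContinuousMap.Homotopy

end Fillers
section Glue

open ContinuousMap ContinuousMap.Homotopy

variable {Z A B Y : Type u} [TopologicalSpace Z] [TopologicalSpace A] [TopologicalSpace B]
  [TopologicalSpace Y]

/-- Build a homotopy between maps out of a double mapping cylinder from compatible
homotopies on the pieces. -/
lemma HPO.mkHomotopic (f : C(Z, A)) (g : C(Z, B)) (h₀ h₁ : C(HPO f g, Y))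
    (FA : C(A × I, Y)) (FB : C(B × I, Y)) (FZ : C((Z × I) × I, Y))
    (gl : ∀ z u, FA (f z, u) = FZ ((z, 0), u))
    (gr : ∀ z u, FZ ((z, 1), u) = FB (g z, u))
    (e0A : ∀ a, FA (a, 0) = h₀ (HPO.inl f g a))
    (e1A : ∀ a, FA (a, 1) = h₁ (HPO.inl f g a))
    (e0B : ∀ b, FB (b, 0) = h₀ (HPO.inr f g b))
    (e1B : ∀ b, FB (b, 1) = h₁ (HPO.inr f g b))
    (e0Z : ∀ zt, FZ (zt, 0) = h₀ (HPO.cyl f g zt))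
    (e1Z : ∀ zt, FZ (zt, 1) = h₁ (HPO.cyl f g zt)) :
    h₀.Homotopic h₁ := by
  have hsound : ∀ x y, HPORel f g x y →
      Sum.elim (⇑FA.curry) (Sum.elim (⇑FZ.curry) (⇑FB.curry)) x =
      Sum.elim (⇑FA.curry) (Sum.elim (⇑FZ.curry) (⇑FB.curry)) y := by
    rintro x y (⟨z⟩ | ⟨z⟩)
    · exact ContinuousMap.ext fun u => gl z u
    · exact ContinuousMap.ext fun u => gr z u
  let Φ : C(HPO f g, C(I, Y)) :=
    ⟨Quot.lift (Sum.elim (⇑FA.curry) (Sum.elim (⇑FZ.curry) (⇑FB.curry))) hsound,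
      continuous_quot_lift _ (Continuous.sumElim (map_continuous FA.curry)
        (Continuous.sumElim (map_continuous FZ.curry) (map_continuous FB.curry)))⟩
  refine ⟨{ toContinuousMap := (ContinuousMap.uncurry Φ).comp ⟨Prod.swap, continuous_swap⟩
            map_zero_left := ?_
            map_one_left := ?_ }⟩
  · refine Quot.ind ?_
    rintro (a | ⟨zt | b⟩)
    · show Φ (Quot.mk _ (Sum.inl a)) 0 = _
      rw [show Φ (Quot.mk _ (Sum.inl a)) = FA.curry a from rfl]
      exact e0A a
    · show Φ (Quot.mk _ (Sum.inr (Sum.inl zt))) 0 = _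
      rw [show Φ (Quot.mk _ (Sum.inr (Sum.inl zt))) = FZ.curry zt from rfl]
      exact e0Z zt
    · show Φ (Quot.mk _ (Sum.inr (Sum.inr b))) 0 = _
      rw [show Φ (Quot.mk _ (Sum.inr (Sum.inr b))) = FB.curry b from rfl]
      exact e0B b
  · refine Quot.ind ?_
    rintro (a | ⟨zt | b⟩)
    · show Φ (Quot.mk _ (Sum.inl a)) 1 = _
      rw [show Φ (Quot.mk _ (Sum.inl a)) = FA.curry a from rfl]
      exact e1A a
    · show Φ (Quot.mk _ (Sum.inr (Sum.inl zt))) 1 = _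
      rw [show Φ (Quot.mk _ (Sum.inr (Sum.inl zt))) = FZ.curry zt from rfl]
      exact e1Z zt
    · show Φ (Quot.mk _ (Sum.inr (Sum.inr b))) 1 = _
      rw [show Φ (Quot.mk _ (Sum.inr (Sum.inr b))) = FB.curry b from rfl]
      exact e1B b

end Glue

section Functor

open ContinuousMap ContinuousMap.Homotopy

variable {A X C' : Type u} [TopologicalSpace A] [TopologicalSpace X] [TopologicalSpace C']

/-- Functoriality of the Ganea construction along a homotopy commutative triangle. -/
lemma ganea_functor (ιX : C(A, X)) (ιC : C(A, C')) (χ : C(X, C'))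
    (hc : (χ.comp ιX).Homotopic ιC) (n : ℕ) :
    ∃ φ : C((ganea ιX n).G, (ganea ιC n).G),
      ((ganea ιC n).g.comp φ).Homotopic (χ.comp (ganea ιX n).g) := by
  obtain ⟨hcH⟩ := hc
  induction n with
  | zero =>
    exact ⟨ContinuousMap.id _, ⟨(hcH.symm.cast rfl rfl : ContinuousMap.Homotopy ιC
      (χ.comp ιX)).cast (by ext; rfl) rfl⟩⟩
  | succ n ih =>
    obtain ⟨φ, ⟨Hn⟩⟩ := ih
    set gX := (ganea ιX n).g with hgX
    set gC := (ganea ιC n).g with hgC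
    -- the three homotopies on the homotopy pullback of `gX` and `ιX`
    let fstX := HPB.fst gX ιX
    let sndX := HPB.snd gX ιX
    let P : ContinuousMap.Homotopy (ιC.comp sndX) ((χ.comp ιX).comp sndX) :=
      hcH.symm.comp (ContinuousMap.Homotopy.refl sndX)
    let Q : ContinuousMap.Homotopy ((χ.comp ιX).comp sndX) ((χ.comp gX).comp fstX) :=
      ((ContinuousMap.Homotopy.refl χ).comp (HPB.pathHomotopy gX ιX)).cast rfl rfl
    let R : ContinuousMap.Homotopy ((χ.comp gX).comp fstX) ((gC.comp φ).comp fstX) :=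
      (Hn.comp (ContinuousMap.Homotopy.refl fstX)).symm
    let T : ContinuousMap.Homotopy (ιC.comp sndX) ((gC.comp φ).comp fstX) := P.trans (Q.trans R)
    let ψ : C(HPB gX ιX, HPB gC ιC) :=
      HPB.lift gC ιC (φ.comp fstX) sndX (T.symm.cast rfl rfl)
    -- the map on the next Ganea spaces
    let Inl := HPO.inl (HPB.snd gC ιC) (HPB.fst gC ιC)
    let Inr := HPO.inr (HPB.snd gC ιC) (HPB.fst gC ιC)
    let H' : ContinuousMap.Homotopy (Inl.comp sndX) ((Inr.comp φ).comp fstX) :=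
      { toFun := fun x => HPO.cyl (HPB.snd gC ιC) (HPB.fst gC ιC) (ψ x.2, x.1)
        continuous_toFun := (map_continuous _).comp
          ((ψ.continuous.comp continuous_snd).prodMk continuous_fst)
        map_zero_left := fun p => (Quot.sound (HPORel.left (ψ p))).symm
        map_one_left := fun p => Quot.sound (HPORel.right (ψ p)) }
    let φ' : C((ganea ιX (n+1)).G, (ganea ιC (n+1)).G) :=
      HPO.desc sndX fstX Inl (Inr.comp φ) H'
    have hφ'inl : ∀ a, φ' (HPO.inl sndX fstX a) = Inl a := fun _ => rfl
    have hφ'inr : ∀ b, φ' (HPO.inr sndX fstX b) = Inr (φ b) := fun _ => rfl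
    have hφ'cyl : ∀ p t, φ' (HPO.cyl sndX fstX (p, t)) =
        HPO.cyl (HPB.snd gC ιC) (HPB.fst gC ιC) (ψ p, t) := fun _ _ => rfl
    have hgC1inl : ∀ a, (ganea ιC (n+1)).g (Inl a) = ιC a := fun _ => rfl
    have hgC1inr : ∀ q, (ganea ιC (n+1)).g
        (HPO.inr (HPB.snd gC ιC) (HPB.fst gC ιC) q) = gC q := fun _ => rfl
    have hgC1cyl : ∀ (q : HPB gC ιC) (t : I), (ganea ιC (n+1)).g
        (HPO.cyl (HPB.snd gC ιC) (HPB.fst gC ιC) (q, t)) = q.1.2.1 (σ t) := fun _ _ => rfl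
    have hgX1inl : ∀ a, (ganea ιX (n+1)).g (HPO.inl sndX fstX a) = ιX a := fun _ => rfl
    have hgX1inr : ∀ b, (ganea ιX (n+1)).g (HPO.inr sndX fstX b) = gX b := fun _ => rfl
    have hgX1cyl : ∀ (p : HPB gX ιX) (t : I), (ganea ιX (n+1)).g
        (HPO.cyl sndX fstX (p, t)) = p.1.2.1 (σ t) := fun _ _ => rfl
    have hψpath : ∀ (p : HPB gX ιX) (r : I), (ψ p).1.2.1 r = T.symm (r, p) := fun _ _ => rfl
    refine ⟨φ', ?_⟩
    refine HPO.mkHomotopic sndX fstX _ _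
      (hcH.symm.toContinuousMap.comp ⟨Prod.swap, continuous_swap⟩)
      (Hn.toContinuousMap.comp ⟨Prod.swap, continuous_swap⟩)
      (filler3 P Q R) ?_ ?_ ?_ ?_ ?_ ?_ ?_ ?_
    · intro p u
      rw [filler3_left]; rfl
    · intro p u
      rw [filler3_right]
      show (Hn.comp (ContinuousMap.Homotopy.refl fstX)) (σ (σ u), p) = _
      rw [unitInterval.symm_symm]; rfl
    · intro a
      rw [show (hcH.symm.toContinuousMap.comp
          (⟨Prod.swap, continuous_swap⟩ : C(A × I, I × A))) (a, 0) = hcH.symm (0, a) from rfl,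
        hcH.symm.apply_zero]
      exact ((congrArg (ganea ιC (n+1)).g (hφ'inl a)).trans (hgC1inl a)).symm
    · intro a
      rw [show (hcH.symm.toContinuousMap.comp
          (⟨Prod.swap, continuous_swap⟩ : C(A × I, I × A))) (a, 1) = hcH.symm (1, a) from rfl,
        hcH.symm.apply_one]
      exact (congrArg χ (hgX1inl a)).symm
    · intro b
      rw [show (Hn.toContinuousMap.comp (⟨Prod.swap, continuous_swap⟩ :
          C((ganea ιX n).G × I, I × (ganea ιX n).G))) (b, 0) = Hn (0, b) from rfl,
        Hn.apply_zero]
      exact ((congrArg (ganea ιC (n+1)).g (hφ'inr b)).trans (hgC1inr (φ b))).symm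
    · intro b
      rw [show (Hn.toContinuousMap.comp (⟨Prod.swap, continuous_swap⟩ :
          C((ganea ιX n).G × I, I × (ganea ιX n).G))) (b, 1) = Hn (1, b) from rfl,
        Hn.apply_one]
      exact (congrArg χ (hgX1inr b)).symm
    · rintro ⟨p, t⟩
      rw [filler3_zero]
      have c1 : (ganea ιC (n+1)).g (φ' (HPO.cyl sndX fstX (p, t))) = T (σ (σ t), p) :=
        (congrArg (ganea ιC (n+1)).g (hφ'cyl p t)).trans
          ((hgC1cyl (ψ p) t).trans ((hψpath p (σ t)).trans rfl))
      calc T (t, p) = T (σ (σ t), p) := by rw [unitInterval.symm_symm]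
        _ = _ := c1.symm
    · rintro ⟨p, t⟩
      rw [filler3_one]
      exact (rfl : Q (t, p) = χ (p.1.2.1 (σ t))).trans (congrArg χ (hgX1cyl p t)).symm

end Functor
section Main

open ContinuousMap ContinuousMap.Homotopy

variable {Z A X Cc : Type u} [TopologicalSpace Z] [TopologicalSpace A]
  [TopologicalSpace X] [TopologicalSpace Cc]

/-- The inductive step: a homotopy section of the `n`-th Ganea map of `ιX` yields a compatible
homotopy section of the `(n+1)`-st Ganea map of `ιC`. -/
lemma relcat_cone_step (ρ : C(Z, A)) (τ : C(Z, X)) (ιX : C(A, X))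
    (ιC : C(A, Cc)) (χ : C(X, Cc)) (hpo : IsHPO ρ τ ιC χ)
    (hc : (χ.comp ιX).Homotopic ιC) (n : ℕ) (h : relcatLe ιX n) :
    relcatLe ιC (n + 1) := by
  obtain ⟨s, ⟨hsec⟩, -⟩ := h
  obtain ⟨K, e, he1, he2⟩ := hpo
  obtain ⟨φ, ⟨Hn⟩⟩ := ganea_functor ιX ιC χ hc n
  set gX := (ganea ιX n).g with hgX
  set gC := (ganea ιC n).g with hgC
  let D := HPO.desc ρ τ ιC χ K
  -- the homotopy `J : gC ∘ φ ∘ s ≃ χ`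
  let J : ContinuousMap.Homotopy ((gC.comp φ).comp s) χ :=
    ((Hn.compContinuousMap s).trans (((ContinuousMap.Homotopy.refl χ).comp
      hsec).cast rfl rfl)).cast rfl (ContinuousMap.comp_id χ)
  let JZ : ContinuousMap.Homotopy (((gC.comp φ).comp s).comp τ) (χ.comp τ) :=
    J.compContinuousMap τ
  let L : ContinuousMap.Homotopy (ιC.comp ρ) ((((gC.comp φ).comp s)).comp τ) :=
    K.trans JZ.symm
  let lam : C(Z, HPB gC ιC) := HPB.lift gC ιC ((φ.comp s).comp τ) ρ (L.symm.cast rfl rfl)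
  let Inl := HPO.inl (HPB.snd gC ιC) (HPB.fst gC ιC)
  let Inr := HPO.inr (HPB.snd gC ιC) (HPB.fst gC ιC)
  let H' : ContinuousMap.Homotopy (Inl.comp ρ) ((Inr.comp (φ.comp s)).comp τ) :=
    { toFun := fun x => HPO.cyl (HPB.snd gC ιC) (HPB.fst gC ιC) (lam x.2, x.1)
      continuous_toFun := (map_continuous _).comp
        ((lam.continuous.comp continuous_snd).prodMk continuous_fst)
      map_zero_left := fun z => (Quot.sound (HPORel.left (lam z))).symm
      map_one_left := fun z => Quot.sound (HPORel.right (lam z)) }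
  let S₀ : C(HPO ρ τ, (ganea ιC (n+1)).G) := HPO.desc ρ τ Inl (Inr.comp (φ.comp s)) H'
  -- pointwise computation lemmas
  have hS0inl : ∀ a, S₀ (HPO.inl ρ τ a) = Inl a := fun _ => rfl
  have hS0inr : ∀ x, S₀ (HPO.inr ρ τ x) = Inr (φ (s x)) := fun _ => rfl
  have hS0cyl : ∀ z t, S₀ (HPO.cyl ρ τ (z, t)) =
      HPO.cyl (HPB.snd gC ιC) (HPB.fst gC ιC) (lam z, t) := fun _ _ => rfl
  have hgC1inl : ∀ a, (ganea ιC (n+1)).g (Inl a) = ιC a := fun _ => rfl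
  have hgC1inr : ∀ q, (ganea ιC (n+1)).g
      (HPO.inr (HPB.snd gC ιC) (HPB.fst gC ιC) q) = gC q := fun _ => rfl
  have hgC1cyl : ∀ (q : HPB gC ιC) (t : I), (ganea ιC (n+1)).g
      (HPO.cyl (HPB.snd gC ιC) (HPB.fst gC ιC) (q, t)) = q.1.2.1 (σ t) := fun _ _ => rfl
  have hlampath : ∀ z r, (lam z).1.2.1 r = L.symm (r, z) := fun _ _ => rfl
  have hDinl : ∀ a, D (HPO.inl ρ τ a) = ιC a := fun _ => rfl
  have hDinr : ∀ x, D (HPO.inr ρ τ x) = χ x := fun _ => rfl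
  have hDcyl : ∀ z t, D (HPO.cyl ρ τ (z, t)) = K (t, z) := fun _ _ => rfl
  -- the comparison homotopy over the double mapping cylinder
  have claim1 : ((ganea ιC (n+1)).g.comp S₀).Homotopic D := by
    refine HPO.mkHomotopic ρ τ _ _
      (ιC.comp (⟨Prod.fst, continuous_fst⟩ : C(A × I, A)))
      (J.toContinuousMap.comp ⟨Prod.swap, continuous_swap⟩)
      (filler2 K JZ.symm) ?_ ?_ ?_ ?_ ?_ ?_ ?_ ?_
    · intro z u
      rw [filler2_left]; rfl
    · intro z u
      rw [filler2_right]
      show JZ (σ (σ u), z) = _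
      rw [unitInterval.symm_symm]; rfl
    · intro a
      exact ((congrArg (ganea ιC (n+1)).g (hS0inl a)).trans (hgC1inl a)).symm
    · intro a
      exact (rfl : _ = ιC a).trans (hDinl a).symm
    · intro x
      rw [show (J.toContinuousMap.comp (⟨Prod.swap, continuous_swap⟩ :
          C(X × I, I × X))) (x, 0) = J (0, x) from rfl, J.apply_zero]
      exact ((congrArg (ganea ιC (n+1)).g (hS0inr x)).trans (hgC1inr (φ (s x)))).symm
    · intro x
      rw [show (J.toContinuousMap.comp (⟨Prod.swap, continuous_swap⟩ :
          C(X × I, I × X))) (x, 1) = J (1, x) from rfl, J.apply_one]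
      exact (hDinr x).symm
    · rintro ⟨z, t⟩
      rw [filler2_zero]
      have c1 : (ganea ιC (n+1)).g (S₀ (HPO.cyl ρ τ (z, t))) = L (σ (σ t), z) :=
        (congrArg (ganea ιC (n+1)).g (hS0cyl z t)).trans
          ((hgC1cyl (lam z) t).trans ((hlampath z (σ t)).trans rfl))
      calc (K.trans JZ.symm) (t, z) = L (σ (σ t), z) := by
            show L (t, z) = _; rw [unitInterval.symm_symm]
        _ = _ := c1.symm
    · rintro ⟨z, t⟩
      rw [filler2_one]
      exact (hDcyl z t).symm
  -- assemble the section over `Cc`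
  have hDinlmap : D.comp (HPO.inl ρ τ) = ιC := ContinuousMap.ext fun a => hDinl a
  have h3 : (e.comp ιC).Homotopic (HPO.inl ρ τ) := by
    rw [← hDinlmap]
    have h2 : ((e.comp D).comp (HPO.inl ρ τ)).Homotopic
        ((ContinuousMap.id (HPO ρ τ)).comp (HPO.inl ρ τ)) :=
      he2.comp (ContinuousMap.Homotopic.refl (HPO.inl ρ τ))
    simpa [ContinuousMap.comp_assoc, ContinuousMap.id_comp] using h2
  refine ⟨S₀.comp e, ?_, ?_⟩
  · -- homotopy section
    have h5 : (((ganea ιC (n+1)).g.comp S₀).comp e).Homotopic (D.comp e) :=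
      claim1.comp (ContinuousMap.Homotopic.refl e)
    exact ((by simpa [ContinuousMap.comp_assoc] using h5 :
      ((ganea ιC (n+1)).g.comp (S₀.comp e)).Homotopic (D.comp e))).trans he1
  · -- compatibility with the structural map
    have h5 : (S₀.comp (e.comp ιC)).Homotopic (S₀.comp (HPO.inl ρ τ)) :=
      (ContinuousMap.Homotopic.refl S₀).comp h3
    have h6 : S₀.comp (HPO.inl ρ τ) = (ganea ιC (n+1)).α :=
      ContinuousMap.ext fun a => (hS0inl a).trans rfl
    rw [← h6]
    simpa [ContinuousMap.comp_assoc] using h5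

end Main

section Arith

lemma theNat_le_succ {P Q : ℕ → Prop} (h : ∀ n, P n → Q (n + 1)) :
    theNat Q ≤ theNat P + 1 := by
  rcases eq_or_ne (theNat P) ⊤ with hP | hP
  · simp [hP]
  · lift theNat P to ℕ using hP with k hk
    have hlt : sInf ((Nat.cast : ℕ → ℕ∞) '' { n | P n }) < (k : ℕ∞) + 1 := by
      rw [show sInf ((Nat.cast : ℕ → ℕ∞) '' { n | P n }) = theNat P from rfl, ← hk]
      exact ENat.lt_add_one_iff (ENat.coe_ne_top k) |>.mpr le_rfl
    obtain ⟨b, hb, hblt⟩ := sInf_lt_iff.mp hlt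
    obtain ⟨m, hm, rfl⟩ := hb
    have h1 : theNat Q ≤ ((m + 1 : ℕ) : ℕ∞) := sInf_le ⟨m + 1, h m hm, rfl⟩
    have hmk : m ≤ k := by
      have : (m : ℕ∞) < ((k + 1 : ℕ) : ℕ∞) := by
        rw [Nat.cast_add, Nat.cast_one]; exact hblt
      exact Nat.lt_succ_iff.mp (ENat.coe_lt_coe.mp this)
    refine h1.trans ?_
    rw [Nat.cast_add, Nat.cast_one]
    exact add_le_add_left (ENat.coe_le_coe.mpr hmk) 1

end Arith

/-- Attaching a cone increases relative category by at most one. -/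
theorem relcat_cone_le {Z A X Cc : Type u} [TopologicalSpace Z] [TopologicalSpace A]
    [TopologicalSpace X] [TopologicalSpace Cc] (ρ : C(Z, A)) (τ : C(Z, X)) (ιX : C(A, X))
    (ιC : C(A, Cc)) (χ : C(X, Cc)) (hpo : IsHPO ρ τ ιC χ)
    (hc : (χ.comp ιX).Homotopic ιC) :
    relcat ιC ≤ relcat ιX + 1 :=
  theNat_le_succ fun n hn => relcat_cone_step ρ τ ιX ιC χ hpo hc n hn
end
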